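/- arXiv:1405.5414 — 4 statements merged into one kernel-verified Lean document; each statement's English description precedes it below -/
import Mathlib

section
/- For every ε > 0 there exists δ > 0 such that the following holds for every C*-algebra A: whenever u and v are partial isometries in A (u·u*·u = u and v·v*·v = v) satisfying 1 − δ < ‖u + v‖ < 1 + δ and 1 − δ < ‖u − v‖ < 1 + δ, one has ‖u − P₀(v)(u)‖ < ε and ‖v − P₀(u)(v)‖ < ε, where P₀(v)(x) = x − v·v*·x − x·v*·v + v·v*·x·v*·v is the Peirce-0 projection associated with v (and analogously for P₀(u)). -/
universe u

set_option linter.unusedSectionVars false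
set_option maxHeartbeats 1000000

section AuxHelpers

variable {B : Type*} [CStarAlgebra B] [PartialOrder B] [StarOrderedRing B]

/-- For a selfadjoint element, `‖a‖ ^ k ≤ ‖a ^ k‖` (for `k ≥ 1`). -/
lemma aux_sa_norm_pow_le {a : B} (ha : IsSelfAdjoint a) {k : ℕ} (hk : 1 ≤ k) :
    ‖a‖ ^ k ≤ ‖a ^ k‖ := by
  by_cases h0 : ‖a‖ = 0
  · rw [h0, zero_pow (by omega)]
    exact norm_nonneg _
  have hpos : 0 < ‖a‖ := (norm_nonneg a).lt_of_ne (Ne.symm h0)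
  have hk2 : k ≤ 2 ^ k := (Nat.lt_two_pow_self (n := k)).le
  have h1 : ‖a ^ 2 ^ k‖ = ‖a‖ ^ 2 ^ k := by
    simpa [NNReal.coe_pow] using congrArg (fun x : NNReal => (x : ℝ)) (ha.nnnorm_pow_two_pow k)
  have hsplit : a ^ 2 ^ k = a ^ k * a ^ (2 ^ k - k) := by
    rw [← pow_add, Nat.add_sub_cancel' hk2]
  have h2 : ‖a ^ 2 ^ k‖ ≤ ‖a ^ k‖ * ‖a‖ ^ (2 ^ k - k) := by
    rw [hsplit]
    calc ‖a ^ k * a ^ (2 ^ k - k)‖ ≤ ‖a ^ k‖ * ‖a ^ (2 ^ k - k)‖ := norm_mul_le _ _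
      _ ≤ ‖a ^ k‖ * ‖a‖ ^ (2 ^ k - k) := by
          have hc : 0 < 2 ^ k - k := by have := Nat.lt_two_pow_self (n := k); omega
          exact mul_le_mul_of_nonneg_left (norm_pow_le' a hc) (norm_nonneg _)
  have h3 : ‖a‖ ^ k * ‖a‖ ^ (2 ^ k - k) ≤ ‖a ^ k‖ * ‖a‖ ^ (2 ^ k - k) := by
    calc ‖a‖ ^ k * ‖a‖ ^ (2 ^ k - k) = ‖a‖ ^ 2 ^ k := by
          rw [← pow_add, Nat.add_sub_cancel' hk2]
      _ = ‖a ^ 2 ^ k‖ := h1.symm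
      _ ≤ _ := h2
  exact le_of_mul_le_mul_right h3 (pow_pos hpos _)

/-- Single binomial term bound: if `q` is a projection acting as a unit on `0 ≤ a`, then
`C(N,k) • a ^ k ≤ (q + a) ^ N`. -/
lemma aux_choose_smul_pow_le {q a : B} (hq2 : q * q = q) (hqs : star q = q) (ha : 0 ≤ a)
    (hqa : q * a = a) (haq : a * q = a) {N k : ℕ} (hk : 1 ≤ k) (hkN : k ≤ N) :
    (N.choose k) • a ^ k ≤ (q + a) ^ N := by
  have hqnn : 0 ≤ q := by
    have : star q * q = q := by rw [hqs, hq2]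
    rw [← this]; exact star_mul_self_nonneg q
  have hcomm : Commute a q := haq.trans hqa.symm
  have hqpow : ∀ n : ℕ, 1 ≤ n → q ^ n = q := by
    intro n hn
    induction n with
    | zero => omega
    | succ m ih =>
      rcases Nat.eq_or_lt_of_le hn with h | h
      · simp [← h]
      · rw [pow_succ, ih (by omega), hq2]
  have hapow : ∀ m n : ℕ, 1 ≤ m → a ^ m * q ^ n = a ^ m := by
    intro m n hm
    induction n with
    | zero => simp
    | succ j ih =>
      rw [pow_succ, ← mul_assoc, ih]
      obtain ⟨m', rfl⟩ : ∃ m', m = m' + 1 := ⟨m - 1, by omega⟩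
      rw [pow_succ, mul_assoc, haq]
  rw [add_comm q a, hcomm.add_pow]
  have hmem : k ∈ Finset.range (N + 1) := Finset.mem_range.mpr (by omega)
  have hterm : ∀ m ∈ Finset.range (N + 1), 0 ≤ a ^ m * q ^ (N - m) * (N.choose m : B) := by
    intro m _
    rcases Nat.eq_zero_or_pos m with rfl | hm
    · simp only [pow_zero, one_mul, Nat.choose_zero_right, Nat.cast_one, mul_one, Nat.sub_zero]
      rcases Nat.eq_zero_or_pos N with rfl | hN
      · simp
      · rw [hqpow N hN]; exact hqnn
    · rw [hapow m (N - m) hm, (Nat.cast_commute (N.choose m) (a ^ m)).eq.symm,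
        ← nsmul_eq_mul]
      exact nsmul_nonneg (CStarAlgebra.pow_nonneg ha m) _
  have hsingle := Finset.single_le_sum hterm hmem
  calc (N.choose k) • a ^ k = a ^ k * q ^ (N - k) * (N.choose k : B) := by
        rw [hapow k (N - k) hk, (Nat.cast_commute (N.choose k) (a ^ k)).eq.symm,
          ← nsmul_eq_mul]
    _ ≤ _ := hsingle

/-- For every `c > 0` there is `N ≥ 1` with `N + 1 ≤ (1 + c) ^ N`. -/
lemma aux_exists_good_N {c : ℝ} (hc : 0 < c) : ∃ N : ℕ, 1 ≤ N ∧ ((N : ℝ) + 1) ≤ (1 + c) ^ N := by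
  obtain ⟨n, hn⟩ : ∃ n : ℕ, 2 / c ^ 2 ≤ (n : ℝ) := exists_nat_ge _
  set m : ℕ := n + 1 with hm_def
  have hm1 : (1 : ℝ) ≤ (m : ℝ) := by exact_mod_cast Nat.one_le_iff_ne_zero.mpr (by omega)
  have hmn : (n : ℝ) ≤ (m : ℝ) := by exact_mod_cast Nat.le_succ n
  have hc2 : (2 : ℝ) ≤ (m : ℝ) * c ^ 2 := by
    have h2 : 2 / c ^ 2 ≤ (m : ℝ) := le_trans hn hmn
    calc (2 : ℝ) = (2 / c ^ 2) * c ^ 2 := by field_simp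
      _ ≤ (m : ℝ) * c ^ 2 := mul_le_mul_of_nonneg_right h2 (by positivity)
  refine ⟨2 * m, by omega, ?_⟩
  have hb : 1 + (m : ℝ) * c ≤ (1 + c) ^ m := one_add_mul_le_pow (by linarith) m
  have hbpos : (0 : ℝ) ≤ 1 + (m : ℝ) * c := by positivity
  calc ((2 * m : ℕ) : ℝ) + 1 = 2 * (m : ℝ) + 1 := by push_cast; ring
    _ ≤ (1 + (m : ℝ) * c) ^ 2 := by
        nlinarith [mul_le_mul_of_nonneg_left hc2 (by positivity : (0:ℝ) ≤ (m:ℝ)), hc.le, hm1]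
    _ ≤ ((1 + c) ^ m) ^ 2 := pow_le_pow_left₀ hbpos hb 2
    _ = (1 + c) ^ (2 * m) := by rw [← pow_mul, mul_comm]

/-- Core quantitative estimate: if a projection `q` is a local unit for `0 ≤ a` and
`‖q + a‖ ≤ 1 + c` with `1 ≤ ‖q + a‖`, then `‖a‖ ≤ 3c`. -/
lemma aux_core_small {q a : B} (hq2 : q * q = q) (hqs : star q = q) (ha : 0 ≤ a)
    (hqa : q * a = a) (haq : a * q = a) (hq1 : (1 : ℝ) ≤ ‖q + a‖)
    {c : ℝ} (hc0 : 0 < c) (hc1 : c ≤ 1) (hs : ‖q + a‖ ≤ 1 + c) : ‖a‖ ≤ 3 * c := by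
  obtain ⟨N, hN1, hNc⟩ := aux_exists_good_N hc0
  set t := ‖a‖ with ht
  set s := ‖q + a‖ with hs'
  have hsnn : (0 : ℝ) ≤ s := norm_nonneg _
  have hterm : ∀ k ∈ Finset.range (N + 1), (N.choose k : ℝ) * t ^ k ≤ s ^ N := by
    intro k hkmem
    have hkN : k ≤ N := by have := Finset.mem_range.mp hkmem; omega
    rcases Nat.eq_zero_or_pos k with rfl | hk
    · simpa using one_le_pow₀ hq1 (n := N)
    · have h1 := aux_choose_smul_pow_le hq2 hqs ha hqa haq hk hkN
      have h2 : ‖(N.choose k) • a ^ k‖ ≤ ‖(q + a) ^ N‖ :=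
        CStarAlgebra.norm_le_norm_of_nonneg_of_le
          (nsmul_nonneg (CStarAlgebra.pow_nonneg ha k) _) h1
      have h3 : ‖(q + a) ^ N‖ ≤ s ^ N := norm_pow_le' _ (by omega)
      have h4 : ‖(N.choose k) • a ^ k‖ = (N.choose k : ℝ) * ‖a ^ k‖ := by
        rw [← Nat.cast_smul_eq_nsmul ℝ, norm_smul, Real.norm_natCast]
      have h5 : (N.choose k : ℝ) * t ^ k ≤ (N.choose k : ℝ) * ‖a ^ k‖ :=
        mul_le_mul_of_nonneg_left (aux_sa_norm_pow_le (IsSelfAdjoint.of_nonneg ha) hk)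
          (by positivity)
      linarith [h4 ▸ h2, h3]
  have hbinom : (1 + t) ^ N = ∑ k ∈ Finset.range (N + 1), (N.choose k : ℝ) * t ^ k := by
    rw [add_comm, add_pow]
    exact Finset.sum_congr rfl fun k _ => by ring
  have hsum : (1 + t) ^ N ≤ ((N : ℝ) + 1) * s ^ N := by
    rw [hbinom]
    calc ∑ k ∈ Finset.range (N + 1), (N.choose k : ℝ) * t ^ k
        ≤ ∑ _k ∈ Finset.range (N + 1), s ^ N := Finset.sum_le_sum hterm
      _ = ((N : ℝ) + 1) * s ^ N := by rw [Finset.sum_const, Finset.card_range]; push_cast; ring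
  have hfin : (1 + t) ^ N ≤ ((1 + c) ^ 2) ^ N := by
    calc (1 + t) ^ N ≤ ((N : ℝ) + 1) * s ^ N := hsum
      _ ≤ (1 + c) ^ N * (1 + c) ^ N :=
          mul_le_mul hNc (pow_le_pow_left₀ hsnn hs N) (by positivity) (by positivity)
      _ = ((1 + c) ^ 2) ^ N := by rw [← pow_add, ← pow_mul]; ring_nf
  have h1t : 1 + t ≤ (1 + c) ^ 2 :=
    le_of_pow_le_pow_left₀ (by omega) (by positivity) hfin
  nlinarith [norm_nonneg a]

/-- If `p, q` are projections with `‖p + q‖ ≤ 1 + c` then `‖q * p * q‖ ≤ 3 * c`. -/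
lemma aux_proj_est (p q : B) (hp2 : p * p = p) (hps : star p = p)
    (hq2 : q * q = q) (hqs : star q = q)
    {c : ℝ} (hc0 : 0 < c) (hc1 : c ≤ 1) (hpq : ‖p + q‖ ≤ 1 + c) :
    ‖q * p * q‖ ≤ 3 * c := by
  have hkey : q * p * q = star (p * q) * (p * q) := by
    calc q * p * q = q * (p * p) * q := by rw [hp2]
      _ = (q * p) * (p * q) := by noncomm_ring
      _ = star (p * q) * (p * q) := by rw [star_mul, hps, hqs]
  have ha : 0 ≤ q * p * q := hkey ▸ star_mul_self_nonneg (p * q)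
  have hqa : q * (q * p * q) = q * p * q := by
    calc q * (q * p * q) = (q * q) * (p * q) := by noncomm_ring
      _ = q * (p * q) := by rw [hq2]
      _ = q * p * q := by rw [mul_assoc]
  have haq : (q * p * q) * q = q * p * q := by
    calc q * p * q * q = q * p * (q * q) := by noncomm_ring
      _ = q * p * q := by rw [hq2]
  have hnq : ‖q‖ * ‖q‖ = ‖q‖ := by
    rw [← CStarRing.norm_star_mul_self, hqs, hq2]
  have hqnorm : ‖q‖ ≤ 1 := by nlinarith [norm_nonneg q]
  have hqaq : ‖q + q * p * q‖ ≤ ‖p + q‖ := by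
    have hrw : q + q * p * q = q * (p + q) * q := by
      have hx : q * (p + q) * q = q * p * q + q := by
        calc q * (p + q) * q = q * p * q + q * q * q := by noncomm_ring
          _ = q * p * q + q := by rw [hq2, hq2]
      rw [hx, add_comm]
    rw [hrw]
    have h0 := norm_nonneg (p + q)
    have h0' := norm_nonneg q
    calc ‖q * (p + q) * q‖ ≤ ‖q * (p + q)‖ * ‖q‖ := norm_mul_le _ _
      _ ≤ ‖q‖ * ‖p + q‖ * ‖q‖ :=
          mul_le_mul_of_nonneg_right (norm_mul_le _ _) (norm_nonneg _)
      _ ≤ ‖p + q‖ := by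
          have hq2' : ‖q‖ * ‖q‖ ≤ 1 := by nlinarith
          nlinarith [mul_le_mul_of_nonneg_right hq2' h0]
  by_cases hA : q * p * q = 0
  · rw [hA, norm_zero]; positivity
  · have hqne : q ≠ 0 := by
      rintro rfl
      exact hA (by simp)
    have hqn1 : ‖q‖ = 1 := by
      have h2' : ‖q‖ ≠ 0 := norm_ne_zero_iff.mpr hqne
      exact mul_left_cancel₀ h2' (by rw [mul_one]; exact hnq)
    have hqnn : 0 ≤ q := by
      have hx : star q * q = q := by rw [hqs, hq2]
      rw [← hx]; exact star_mul_self_nonneg q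
    have hq1 : (1 : ℝ) ≤ ‖q + q * p * q‖ := by
      calc (1 : ℝ) = ‖q‖ := hqn1.symm
        _ ≤ ‖q + q * p * q‖ :=
            CStarAlgebra.norm_le_norm_of_nonneg_of_le hqnn (le_add_of_nonneg_right ha)
    exact aux_core_small hq2 hqs ha hqa haq hq1 hc0 hc1 (le_trans hqaq hpq)

/-- Key estimate for partial isometries in a unital C*-algebra. -/
lemma aux_partial_isom_est (w z : B) (hw : w * star w * w = w) (hz : z * star z * z = z)
    {c : ℝ} (hc0 : 0 < c) (hc1 : c ≤ 1)
    (h1 : ‖w + z‖ ^ 2 < 1 + c) (h2 : ‖w - z‖ ^ 2 < 1 + c) :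
    ‖w * (star z * z)‖ ^ 2 ≤ 3 * c := by
  have hp2 : (star w * w) * (star w * w) = star w * w := by
    calc (star w * w) * (star w * w) = star w * (w * star w * w) := by noncomm_ring
      _ = star w * w := by rw [hw]
  have hq2 : (star z * z) * (star z * z) = star z * z := by
    calc (star z * z) * (star z * z) = star z * (z * star z * z) := by noncomm_ring
      _ = star z * z := by rw [hz]
  have hps : star (star w * w) = star w * w := by simp [star_mul]
  have hqs : star (star z * z) = star z * z := by simp [star_mul]
  have hsum : star (w + z) * (w + z) + star (w - z) * (w - z)
      = (star w * w + star z * z) + (star w * w + star z * z) := by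
    simp only [star_add, star_sub]
    noncomm_ring
  have hpq : ‖star w * w + star z * z‖ ≤ 1 + c := by
    have hle : ‖(star w * w + star z * z) + (star w * w + star z * z)‖
        ≤ ‖star (w + z) * (w + z)‖ + ‖star (w - z) * (w - z)‖ := hsum ▸ norm_add_le _ _
    have e1 : ‖star (w + z) * (w + z)‖ = ‖w + z‖ ^ 2 := by
      rw [CStarRing.norm_star_mul_self, sq]
    have e2 : ‖star (w - z) * (w - z)‖ = ‖w - z‖ ^ 2 := by
      rw [CStarRing.norm_star_mul_self, sq]
    have e3 : ‖(star w * w + star z * z) + (star w * w + star z * z)‖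
        = 2 * ‖star w * w + star z * z‖ := by
      rw [← two_smul ℝ (star w * w + star z * z), norm_smul]; simp
    rw [e1, e2, e3] at hle
    linarith
  have hest := aux_proj_est (star w * w) (star z * z) hp2 hps hq2 hqs hc0 hc1 hpq
  have hnorm : ‖w * (star z * z)‖ ^ 2 = ‖star z * z * (star w * w) * (star z * z)‖ := by
    rw [sq, ← CStarRing.norm_star_mul_self]
    congr 1
    simp only [star_mul, star_star]
    noncomm_ring
  rw [hnorm]
  exact hest

end AuxHelpers

/-- Half of the main statement, proved by passing to the unitization. -/
lemma aux_half_est (A : Type u) [NonUnitalCStarAlgebra A] {c ε : ℝ} (hc0 : 0 < c) (hc1 : c ≤ 1)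
    (hε : 0 < ε) (hcε : 3 * c < (ε / 3) ^ 2) (u v : A)
    (hu : u * star u * u = u) (hv : v * star v * v = v)
    (h1 : ‖u + v‖ ^ 2 < 1 + c) (h2 : ‖u - v‖ ^ 2 < 1 + c) :
    ‖u - (u - v * star v * u - u * (star v * v) + v * star v * u * (star v * v))‖ < ε := by
  set B' := Unitization ℂ A with hB'
  let U : B' := (u : B')
  let V : B' := (v : B')
  have hU : U * star U * U = U := by
    show (u : B') * star (u : B') * (u : B') = (u : B')
    rw [← Unitization.inr_star, ← Unitization.inr_mul, ← Unitization.inr_mul, hu]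
  have hV : V * star V * V = V := by
    show (v : B') * star (v : B') * (v : B') = (v : B')
    rw [← Unitization.inr_star, ← Unitization.inr_mul, ← Unitization.inr_mul, hv]
  have hn1 : ‖U + V‖ = ‖u + v‖ := by
    show ‖(u : B') + (v : B')‖ = ‖u + v‖
    rw [← Unitization.inr_add, Unitization.norm_inr]
  have hn2 : ‖U - V‖ = ‖u - v‖ := by
    show ‖(u : B') - (v : B')‖ = ‖u - v‖
    rw [← Unitization.inr_sub, Unitization.norm_inr]
  have estA : ‖U * (star V * V)‖ ^ 2 ≤ 3 * c :=
    aux_partial_isom_est U V hU hV hc0 hc1 (by rw [hn1]; exact h1) (by rw [hn2]; exact h2)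
  have hU' : star U * star (star U) * star U = star U := by
    simpa [star_mul, star_star, mul_assoc] using congrArg star hU
  have hV' : star V * star (star V) * star V = star V := by
    simpa [star_mul, star_star, mul_assoc] using congrArg star hV
  have estB : ‖star U * (star (star V) * star V)‖ ^ 2 ≤ 3 * c := by
    refine aux_partial_isom_est (star U) (star V) hU' hV' hc0 hc1 ?_ ?_
    · rw [← star_add, norm_star, hn1]; exact h1
    · rw [← star_sub, norm_star, hn2]; exact h2
  have estB' : ‖star U * (V * star V)‖ ^ 2 ≤ 3 * c := by simpa [star_star] using estB
  have hε3 : (0 : ℝ) < ε / 3 := by positivity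
  have bX2 : ‖u * (star v * v)‖ < ε / 3 := by
    have heq : ‖u * (star v * v)‖ = ‖U * (star V * V)‖ := by
      rw [show U * (star V * V) = ((u * (star v * v) : A) : B') by
        simp [U, V, Unitization.inr_mul, Unitization.inr_star], Unitization.norm_inr]
    rw [heq]
    exact lt_of_pow_lt_pow_left₀ 2 hε3.le (lt_of_le_of_lt estA hcε)
  have bX1 : ‖v * star v * u‖ < ε / 3 := by
    have heq : ‖v * star v * u‖ = ‖star U * (V * star V)‖ := by
      rw [show star U * (V * star V) = star (((v * star v * u : A) : B')) by
        simp [U, V, Unitization.inr_mul, Unitization.inr_star, star_mul, star_star, mul_assoc],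
        norm_star, Unitization.norm_inr]
    rw [heq]
    exact lt_of_pow_lt_pow_left₀ 2 hε3.le (lt_of_le_of_lt estB' hcε)
  have bX3 : ‖v * star v * u * (star v * v)‖ < ε / 3 := by
    have hproj : ‖v * star v‖ ≤ 1 := by
      have h1' : ‖v * star v‖ * ‖v * star v‖ = ‖v * star v‖ := by
        rw [← CStarRing.norm_star_mul_self]
        congr 1
        calc star (v * star v) * (v * star v)
            = star (star v) * star v * (v * star v) := by rw [star_mul]
          _ = v * star v * (v * star v) := by rw [star_star]
          _ = (v * star v * v) * star v := by noncomm_ring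
          _ = v * star v := by rw [hv]
      nlinarith [norm_nonneg (v * star v)]
    have hassoc : v * star v * u * (star v * v) = (v * star v) * (u * (star v * v)) := by
      noncomm_ring
    rw [hassoc]
    calc ‖(v * star v) * (u * (star v * v))‖ ≤ ‖v * star v‖ * ‖u * (star v * v)‖ :=
          norm_mul_le _ _
      _ ≤ 1 * ‖u * (star v * v)‖ := mul_le_mul_of_nonneg_right hproj (norm_nonneg _)
      _ = ‖u * (star v * v)‖ := one_mul _
      _ < ε / 3 := bX2
  have hsplit : u - (u - v * star v * u - u * (star v * v) + v * star v * u * (star v * v))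
      = v * star v * u + u * (star v * v) - v * star v * u * (star v * v) := by abel
  rw [hsplit]
  calc ‖v * star v * u + u * (star v * v) - v * star v * u * (star v * v)‖
      ≤ ‖v * star v * u + u * (star v * v)‖ + ‖v * star v * u * (star v * v)‖ :=
        norm_sub_le _ _
    _ ≤ ‖v * star v * u‖ + ‖u * (star v * v)‖ + ‖v * star v * u * (star v * v)‖ := by
        linarith [norm_add_le (v * star v * u) (u * (star v * v))]
    _ < ε / 3 + ε / 3 + ε / 3 := by linarith
    _ = ε := by ring

/-- Quantitative version of M-orthogonality of tripotents (partial
isometries in the C*-algebra case): for every `ε > 0` there is `δ > 0`, uniform over all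
C*-algebras, such that for partial isometries `u, v` with `1 - δ < ‖u ± v‖ < 1 + δ`, one has
`‖u - P₀(v)(u)‖ < ε` and `‖v - P₀(u)(v)‖ < ε`, where
`P₀(v)(x) = x - v v* x - x v* v + v v* x v* v` is the Peirce-0 projection. -/
theorem quantitative_m_orthogonality_partial_isometries :
    ∀ ε > (0 : ℝ), ∃ δ > (0 : ℝ),
      ∀ (A : Type u) [inst : NonUnitalCStarAlgebra A] (u v : A),
        u * star u * u = u → v * star v * v = v →
        1 - δ < ‖u + v‖ → ‖u + v‖ < 1 + δ →
        1 - δ < ‖u - v‖ → ‖u - v‖ < 1 + δ →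
        ‖u - (u - v * star v * u - u * (star v * v) + v * star v * u * (star v * v))‖ < ε ∧
        ‖v - (v - u * star u * v - v * (star u * u) + u * star u * v * (star u * u))‖ < ε := by
  intro ε hε
  have hc0 : 0 < min 1 (ε ^ 2 / 28) := lt_min one_pos (by positivity)
  set c : ℝ := min 1 (ε ^ 2 / 28) with hc_def
  have hc1 : c ≤ 1 := min_le_left _ _
  have hδ0 : 0 < min 1 (c / 3) := lt_min one_pos (by positivity)
  refine ⟨min 1 (c / 3), hδ0, ?_⟩
  set δ : ℝ := min 1 (c / 3) with hδ_def
  have hδ1 : δ ≤ 1 := min_le_left _ _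
  have hδc : δ ≤ c / 3 := min_le_right _ _
  intro A instA u v hu hv _ hup1 _ hup2
  have key : ∀ x : A, ‖x‖ < 1 + δ → ‖x‖ ^ 2 < 1 + c := by
    intro x hx
    have hn := norm_nonneg x
    nlinarith [mul_self_lt_mul_self hn hx, hδ0.le]
  have hcε : 3 * c < (ε / 3) ^ 2 := by
    have hcr : c ≤ ε ^ 2 / 28 := min_le_right _ _
    nlinarith [hε]
  refine ⟨aux_half_est A hc0 hc1 hε hcε u v hu hv (key _ hup1) (key _ hup2), ?_⟩
  have h1' : ‖v + u‖ ^ 2 < 1 + c := by rw [add_comm]; exact key _ hup1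
  have h2' : ‖v - u‖ ^ 2 < 1 + c := by rw [norm_sub_rev]; exact key _ hup2
  exact aux_half_est A hc0 hc1 hε hcε v u hv hu h1' h2'
end

section
/- For every ε > 0 and every natural number n ≥ 1 there exists δ = δ(n, ε) > 0 such that the following holds for every σ-finite measure space (Ω, Σ, μ): whenever φ₁, …, φₙ ∈ L¹(μ, ℂ) satisfy ∑_{j=1}^n |α_j| ≥ ‖∑_{j=1}^n α_j φ_j‖₁ ≥ (1 − δ) ∑_{j=1}^n |α_j| for all complex numbers α₁, …, αₙ, then (i) there exist a₁, …, aₙ ∈ L∞(μ, ℂ) with ‖a_j‖_∞ = 1, a_i·a_j = 0 μ-almost everywhere for i ≠ j, and Re ∫ a_j·φ_j dμ > 1 − ε for every j, and (ii) there exist φ̃₁, …, φ̃ₙ ∈ L¹(μ, ℂ) with ‖φ̃_j‖₁ = 1, φ̃_i·φ̃_j = 0 μ-almost everywhere for i ≠ j, and ‖φ_j − φ̃_j‖₁ < ε for every j. -/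
open MeasureTheory Complex

universe u

lemma aux_sqrt_le {a b : ℝ} (hb : 0 ≤ b) (hba : b ≤ a) :
    Real.sqrt (a ^ 2 + b ^ 2) ≤ a + b / 2 := by
  have ha : 0 ≤ a := hb.trans hba
  rw [show a + b / 2 = Real.sqrt ((a + b / 2) ^ 2) from (Real.sqrt_sq (by linarith)).symm]
  apply Real.sqrt_le_sqrt
  nlinarith

lemma aux_min_le {a b : ℝ} (ha : 0 ≤ a) (hb : 0 ≤ b) :
    min a b ≤ 2 * (a + b - Real.sqrt (a ^ 2 + b ^ 2)) := by
  rcases le_total a b with h | h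
  · have h2 : Real.sqrt (a ^ 2 + b ^ 2) ≤ b + a / 2 := by
      rw [add_comm (a ^ 2)]; exact aux_sqrt_le ha h
    rw [min_eq_left h]; linarith
  · have h2 : Real.sqrt (a ^ 2 + b ^ 2) ≤ a + b / 2 := aux_sqrt_le hb h
    rw [min_eq_right h]; linarith

lemma aux_pair (u v : ℂ) :
    ‖u + v‖ + ‖u - v‖ ≤ 2 * Real.sqrt (‖u‖ ^ 2 + ‖v‖ ^ 2) := by
  have par := parallelogram_law_with_norm ℂ u v
  have h1 : (‖u + v‖ + ‖u - v‖) ^ 2 ≤ 4 * (‖u‖ ^ 2 + ‖v‖ ^ 2) := by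
    nlinarith [norm_nonneg (u + v), norm_nonneg (u - v), sq_nonneg (‖u + v‖ - ‖u - v‖)]
  have h2 : ‖u + v‖ + ‖u - v‖ = Real.sqrt ((‖u + v‖ + ‖u - v‖) ^ 2) :=
    (Real.sqrt_sq (by positivity)).symm
  rw [h2]
  calc Real.sqrt ((‖u + v‖ + ‖u - v‖) ^ 2) ≤ Real.sqrt (4 * (‖u‖ ^ 2 + ‖v‖ ^ 2)) :=
        Real.sqrt_le_sqrt h1
    _ = 2 * Real.sqrt (‖u‖ ^ 2 + ‖v‖ ^ 2) := by
        rw [show (4 : ℝ) * (‖u‖ ^ 2 + ‖v‖ ^ 2) = 2 ^ 2 * (‖u‖ ^ 2 + ‖v‖ ^ 2) by ring,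
          Real.sqrt_mul (by positivity), Real.sqrt_sq (by norm_num)]

lemma aux_min_norm (u v : ℂ) :
    min ‖u‖ ‖v‖ ≤ 2 * (‖u‖ + ‖v‖) - (‖u + v‖ + ‖u - v‖) := by
  have h1 := aux_min_le (norm_nonneg u) (norm_nonneg v)
  have h2 := aux_pair u v
  linarith

lemma aux_sign_mul (z : ℂ) :
    (starRingEnd ℂ) z * ((‖z‖⁻¹ : ℝ) : ℂ) * z = ((‖z‖ : ℝ) : ℂ) := by
  have h1 : (starRingEnd ℂ) z * z = ((‖z‖ ^ 2 : ℝ) : ℂ) := by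
    rw [mul_comm, Complex.mul_conj, Complex.normSq_eq_norm_sq]
  calc (starRingEnd ℂ) z * ((‖z‖⁻¹ : ℝ) : ℂ) * z
      = (starRingEnd ℂ) z * z * ((‖z‖⁻¹ : ℝ) : ℂ) := by ring
    _ = ((‖z‖ ^ 2 * ‖z‖⁻¹ : ℝ) : ℂ) := by rw [h1]; push_cast; ring
    _ = ((‖z‖ : ℝ) : ℂ) := by
        congr 1
        rw [sq]
        field_simp

set_option maxHeartbeats 2000000 in
/-- Commutative instance of the quantitative perturbation of `ℓ₁(n)`-copies
in preduals of JBW*-triples: for every `ε > 0` and `n ≥ 1` there is `δ = δ(n, ε) > 0`,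
uniform over all σ-finite measure spaces, such that whenever `φ₁, …, φₙ ∈ L¹(μ, ℂ)` span
`ℓ₁(n)` `(1 - δ)`-isomorphically, then (i) there are norm-one `a₁, …, aₙ ∈ L∞(μ, ℂ)` with
`aᵢ aⱼ = 0` a.e. for `i ≠ j` and `Re ∫ aⱼ φⱼ dμ > 1 - ε`, and (ii) there are norm-one
pairwise a.e. orthogonal `φ̃₁, …, φ̃ₙ ∈ L¹(μ, ℂ)` with `‖φⱼ - φ̃ⱼ‖₁ < ε`. -/
theorem quantitative_l_orthogonality_L1 :
    ∀ ε > (0 : ℝ), ∀ n : ℕ, 1 ≤ n → ∃ δ > (0 : ℝ),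
      ∀ (Ω : Type u) [inst : MeasurableSpace Ω] (μ : Measure Ω) [SigmaFinite μ]
        (φ : Fin n → Lp ℂ 1 μ),
        (∀ α : Fin n → ℂ,
          ‖∑ j, α j • φ j‖ ≤ ∑ j, ‖α j‖ ∧
          (1 - δ) * ∑ j, ‖α j‖ ≤ ‖∑ j, α j • φ j‖) →
        (∃ a : Fin n → Lp ℂ ⊤ μ,
          (∀ j, ‖a j‖ = 1) ∧
          (∀ i j, i ≠ j → ∀ᵐ x ∂μ, (a i) x * (a j) x = 0) ∧
          (∀ j, 1 - ε < (∫ x, (a j) x * (φ j) x ∂μ).re)) ∧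
        (∃ ψ : Fin n → Lp ℂ 1 μ,
          (∀ j, ‖ψ j‖ = 1) ∧
          (∀ i j, i ≠ j → ∀ᵐ x ∂μ, (ψ i) x * (ψ j) x = 0) ∧
          (∀ j, ‖φ j - ψ j‖ < ε)) := by
  intro ε hε n hn
  have hN1 : (1 : ℝ) ≤ (n : ℝ) := by exact_mod_cast hn
  set δ : ℝ := min ε 1 / (16 * ((n : ℝ) + 1)) with hδdef
  have hmpos : 0 < min ε 1 := lt_min hε one_pos
  have hδpos : 0 < δ := by positivity
  have hδscale : δ * (16 * ((n : ℝ) + 1)) = min ε 1 := by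
    rw [hδdef]; field_simp
  have hδ_min : δ * (16 * ((n : ℝ) + 1)) ≤ min ε 1 := le_of_eq hδscale
  refine ⟨δ, hδpos, ?_⟩
  intro Ω inst μ hσ φ hφ
  -- basic norm facts
  have hsum_single : ∀ (j : Fin n) (c : ℂ), ∑ k, (Pi.single j c : Fin n → ℂ) k • φ k = c • φ j := by
    intro j c
    rw [Finset.sum_eq_single j (fun k _ hk => by rw [Pi.single_eq_of_ne hk, zero_smul])
      (by simp)]
    rw [Pi.single_eq_same]
  have hnorm_single : ∀ (j : Fin n) (c : ℂ), ∑ k, ‖(Pi.single j c : Fin n → ℂ) k‖ = ‖c‖ := by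
    intro j c
    rw [Finset.sum_eq_single j (fun k _ hk => by rw [Pi.single_eq_of_ne hk, norm_zero])
      (by simp)]
    rw [Pi.single_eq_same]
  have hφ_le : ∀ j, ‖φ j‖ ≤ 1 := by
    intro j
    have h := (hφ (Pi.single j 1)).1
    rwa [hsum_single, hnorm_single, one_smul, norm_one] at h
  have hφ_ge : ∀ j, 1 - δ ≤ ‖φ j‖ := by
    intro j
    have h := (hφ (Pi.single j 1)).2
    rwa [hsum_single, hnorm_single, one_smul, norm_one, mul_one] at h
  have hpair_ge : ∀ (i j : Fin n), i ≠ j → ∀ c : ℂ, ‖c‖ = 1 →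
      (1 - δ) * 2 ≤ ‖φ i + c • φ j‖ := by
    intro i j hij c hc
    have h := (hφ ((Pi.single i (1:ℂ) : Fin n → ℂ) + (Pi.single j c : Fin n → ℂ))).2
    have hs : ∑ k, ((Pi.single i (1:ℂ) : Fin n → ℂ) + (Pi.single j c : Fin n → ℂ)) k • φ k = φ i + c • φ j := by
      simp only [Pi.add_apply, add_smul, Finset.sum_add_distrib, hsum_single, one_smul]
    have hnpt : ∀ k, ‖((Pi.single i (1:ℂ) : Fin n → ℂ) + (Pi.single j c : Fin n → ℂ)) k‖
        = ‖(Pi.single i (1:ℂ) : Fin n → ℂ) k‖ + ‖(Pi.single j c : Fin n → ℂ) k‖ := by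
      intro k
      rcases eq_or_ne k i with rfl | hki
      · rw [Pi.add_apply, Pi.single_eq_same, Pi.single_eq_of_ne hij, add_zero, norm_zero,
          add_zero]
      · rcases eq_or_ne k j with rfl | hkj
        · rw [Pi.add_apply, Pi.single_eq_same, Pi.single_eq_of_ne hki, norm_zero, zero_add,
            zero_add]
        · simp [Pi.single_eq_of_ne hki, Pi.single_eq_of_ne hkj]
    have hnsum : ∑ k, ‖((Pi.single i (1:ℂ) : Fin n → ℂ) + (Pi.single j c : Fin n → ℂ)) k‖ = 2 := by
      rw [Finset.sum_congr rfl fun k _ => hnpt k, Finset.sum_add_distrib, hnorm_single,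
        hnorm_single, norm_one, hc]
      norm_num
    rwa [hs, hnsum] at h
  -- integral facts
  have hInt : ∀ j, Integrable (⇑(φ j)) μ := fun j => L1.integrable_coeFn (φ j)
  have hFmeas : ∀ j, Measurable fun x => ‖(φ j) x‖ :=
    fun j => (Lp.stronglyMeasurable (φ j)).measurable.norm
  have hadd_eq : ∀ i j : Fin n, ‖φ i + φ j‖ = ∫ x, ‖(φ i) x + (φ j) x‖ ∂μ := by
    intro i j
    rw [L1.norm_eq_integral_norm]
    refine integral_congr_ae ?_
    filter_upwards [Lp.coeFn_add (φ i) (φ j)] with x hx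
    rw [hx, Pi.add_apply]
  have hsub_eq : ∀ i j : Fin n, ‖φ i - φ j‖ = ∫ x, ‖(φ i) x - (φ j) x‖ ∂μ := by
    intro i j
    rw [L1.norm_eq_integral_norm]
    refine integral_congr_ae ?_
    filter_upwards [Lp.coeFn_sub (φ i) (φ j)] with x hx
    rw [hx, Pi.sub_apply]
  have hminInt : ∀ i j : Fin n, Integrable (fun x => min ‖(φ i) x‖ ‖(φ j) x‖) μ := by
    intro i j
    exact (hInt i).norm.inf (hInt j).norm
  have hmin_le : ∀ i j : Fin n, i ≠ j →
      ∫ x, min ‖(φ i) x‖ ‖(φ j) x‖ ∂μ ≤ 4 * δ := by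
    intro i j hij
    have hI1 : Integrable (fun x => 2 * (‖(φ i) x‖ + ‖(φ j) x‖)) μ :=
      ((hInt i).norm.add (hInt j).norm).const_mul 2
    have hIa : Integrable (fun x => ‖(φ i) x + (φ j) x‖) μ := ((hInt i).add (hInt j)).norm
    have hIs : Integrable (fun x => ‖(φ i) x - (φ j) x‖) μ := ((hInt i).sub (hInt j)).norm
    have hI2 : Integrable (fun x => ‖(φ i) x + (φ j) x‖ + ‖(φ i) x - (φ j) x‖) μ :=
      hIa.add hIs
    have h1 : ∫ x, min ‖(φ i) x‖ ‖(φ j) x‖ ∂μ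
        ≤ ∫ x, (2 * (‖(φ i) x‖ + ‖(φ j) x‖)
            - (‖(φ i) x + (φ j) x‖ + ‖(φ i) x - (φ j) x‖)) ∂μ :=
      integral_mono (hminInt i j) (hI1.sub hI2) fun x => aux_min_norm _ _
    rw [integral_sub hI1 hI2, MeasureTheory.integral_const_mul 2, integral_add (hInt i).norm (hInt j).norm,
      integral_add hIa hIs] at h1
    rw [← L1.norm_eq_integral_norm, ← L1.norm_eq_integral_norm, ← hadd_eq, ← hsub_eq] at h1
    have h2 : (1 - δ) * 2 ≤ ‖φ i + φ j‖ := by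
      have := hpair_ge i j hij 1 norm_one
      rwa [one_smul] at this
    have h3 : (1 - δ) * 2 ≤ ‖φ i - φ j‖ := by
      have := hpair_ge i j hij (-1) (by simp)
      rwa [neg_one_smul, ← sub_eq_add_neg] at this
    have h4 := hφ_le i
    have h5 := hφ_le j
    linarith
  -- the disjoint "argmax" sets
  set A : Fin n → Set Ω := fun j =>
    {x | (∀ i, ‖(φ i) x‖ ≤ ‖(φ j) x‖) ∧ ∀ i, i < j → ‖(φ i) x‖ < ‖(φ j) x‖} with hAdef
  have hAmeas : ∀ j, MeasurableSet (A j) := by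
    intro j
    have : A j = (⋂ i, {x | ‖(φ i) x‖ ≤ ‖(φ j) x‖})
        ∩ ⋂ i, ⋂ (_ : i < j), {x | ‖(φ i) x‖ < ‖(φ j) x‖} := by
      ext x
      simp [hAdef, Set.mem_iInter, Set.mem_setOf_eq]
    rw [this]
    exact (MeasurableSet.iInter fun i => measurableSet_le (hFmeas i) (hFmeas j)).inter
      (MeasurableSet.iInter fun i => MeasurableSet.iInter fun _ =>
        measurableSet_lt (hFmeas i) (hFmeas j))
  have hcover : ∀ x, ∃ j, x ∈ A j := by
    intro x
    have hne : Nonempty (Fin n) := ⟨⟨0, hn⟩⟩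
    obtain ⟨j0, -, hj0⟩ := Finset.exists_max_image Finset.univ
      (fun j => ‖(φ j) x‖) Finset.univ_nonempty
    set S := Finset.univ.filter (fun j : Fin n => ∀ i, ‖(φ i) x‖ ≤ ‖(φ j) x‖) with hSdef
    have hS : S.Nonempty := ⟨j0, by
      simp only [hSdef, Finset.mem_filter, Finset.mem_univ, true_and]
      exact fun i => hj0 i (Finset.mem_univ i)⟩
    refine ⟨S.min' hS, ?_, ?_⟩
    · have := S.min'_mem hS
      simp only [hSdef, Finset.mem_filter, Finset.mem_univ, true_and] at this
      exact this
    · intro i hi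
      have hiS : i ∉ S := fun hmem => absurd (S.min'_le i hmem) (not_le.mpr hi)
      simp only [hSdef, Finset.mem_filter, Finset.mem_univ, true_and, not_forall,
        not_le] at hiS
      obtain ⟨k, hk⟩ := hiS
      have hkS := S.min'_mem hS
      simp only [hSdef, Finset.mem_filter, Finset.mem_univ, true_and] at hkS
      exact lt_of_lt_of_le hk (hkS k)
  have hdisj : ∀ i j : Fin n, i ≠ j → ∀ x, x ∈ A i → x ∈ A j → False := by
    intro i j hij x hxi hxj
    rcases hij.lt_or_gt with h | h
    · exact absurd (hxi.1 j) (not_le.mpr (hxj.2 i h))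
    · exact absurd (hxj.1 i) (not_le.mpr (hxi.2 j h))
  -- the key estimate : mass of `φ j` outside `A j` is small
  have hAc : ∀ j : Fin n, ∫ x, (A j)ᶜ.indicator (fun x => ‖(φ j) x‖) x ∂μ
      ≤ 4 * δ * (n : ℝ) := by
    intro j
    have hptw : ∀ x, (A j)ᶜ.indicator (fun x => ‖(φ j) x‖) x
        ≤ ∑ i ∈ Finset.univ.erase j, min ‖(φ i) x‖ ‖(φ j) x‖ := by
      intro x
      by_cases hx : x ∈ A j
      · rw [Set.indicator_of_notMem (by simpa using hx)]
        exact Finset.sum_nonneg fun i _ => le_min (norm_nonneg _) (norm_nonneg _)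
      · obtain ⟨i, hi⟩ := hcover x
        have hij : i ≠ j := fun h => hx (h ▸ hi)
        rw [Set.indicator_of_mem (by simpa using hx)]
        have h1 : ‖(φ j) x‖ ≤ ‖(φ i) x‖ := hi.1 j
        calc ‖(φ j) x‖ = min ‖(φ i) x‖ ‖(φ j) x‖ := (min_eq_right h1).symm
          _ ≤ ∑ i ∈ Finset.univ.erase j, min ‖(φ i) x‖ ‖(φ j) x‖ :=
              Finset.single_le_sum (f := fun k => min ‖(φ k) x‖ ‖(φ j) x‖)
                (fun k _ => le_min (norm_nonneg _) (norm_nonneg _))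
                (Finset.mem_erase.mpr ⟨hij, Finset.mem_univ i⟩)
    have hIndInt : Integrable ((A j)ᶜ.indicator (fun x => ‖(φ j) x‖)) μ :=
      (hInt j).norm.indicator (hAmeas j).compl
    have h2 : ∫ x, (A j)ᶜ.indicator (fun x => ‖(φ j) x‖) x ∂μ
        ≤ ∑ i ∈ Finset.univ.erase j, ∫ x, min ‖(φ i) x‖ ‖(φ j) x‖ ∂μ := by
      rw [← integral_finset_sum _ (fun i _ => hminInt i j)]
      exact integral_mono hIndInt (integrable_finset_sum _ fun i _ => hminInt i j) hptw
    refine h2.trans ?_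
    calc ∑ i ∈ Finset.univ.erase j, ∫ x, min ‖(φ i) x‖ ‖(φ j) x‖ ∂μ
        ≤ ∑ i ∈ Finset.univ.erase j, 4 * δ :=
          Finset.sum_le_sum fun i hi => hmin_le i j (Finset.ne_of_mem_erase hi)
      _ = ((Finset.univ.erase j).card : ℝ) * (4 * δ) := by
          rw [Finset.sum_const, nsmul_eq_mul]
      _ ≤ 4 * δ * (n : ℝ) := by
          have hcard : (Finset.univ.erase j).card ≤ n := by
            refine le_trans (Finset.card_erase_le) ?_
            simp
          have : ((Finset.univ.erase j).card : ℝ) ≤ (n : ℝ) := by exact_mod_cast hcard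
          nlinarith
  -- restricted functions and their Lp versions
  have hmem : ∀ j, MemLp ((A j).indicator (⇑(φ j))) 1 μ :=
    fun j => (Lp.memLp (φ j)).indicator (hAmeas j)
  set ψ' : Fin n → Lp ℂ 1 μ := fun j => ((hmem j).toLp _) with hψ'def
  have hψ'coe : ∀ j, ⇑(ψ' j) =ᵐ[μ] (A j).indicator (⇑(φ j)) := fun j => MemLp.coeFn_toLp _
  have hdiffnorm : ∀ j, ‖φ j - ψ' j‖
      = ∫ x, (A j)ᶜ.indicator (fun x => ‖(φ j) x‖) x ∂μ := by
    intro j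
    rw [L1.norm_eq_integral_norm]
    refine integral_congr_ae ?_
    filter_upwards [Lp.coeFn_sub (φ j) (ψ' j), hψ'coe j] with x h1 h2
    rw [h1, Pi.sub_apply, h2]
    by_cases hx : x ∈ A j
    · rw [Set.indicator_of_mem hx, Set.indicator_of_notMem (by simpa using hx)]
      simp
    · rw [Set.indicator_of_notMem hx, Set.indicator_of_mem (Set.mem_compl hx), sub_zero]
  have hcnorm : ∀ j, ‖ψ' j‖ = ∫ x, (A j).indicator (fun x => ‖(φ j) x‖) x ∂μ := by
    intro j
    rw [L1.norm_eq_integral_norm]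
    refine integral_congr_ae ?_
    filter_upwards [hψ'coe j] with x h2
    rw [h2]
    by_cases hx : x ∈ A j
    · rw [Set.indicator_of_mem hx, Set.indicator_of_mem hx]
    · rw [Set.indicator_of_notMem hx, Set.indicator_of_notMem hx, norm_zero]
  have hdiff_le : ∀ j, ‖φ j - ψ' j‖ ≤ 4 * δ * (n : ℝ) := fun j => (hdiffnorm j) ▸ hAc j
  have hc_lb : ∀ j, 1 - δ - 4 * δ * (n : ℝ) ≤ ‖ψ' j‖ := by
    intro j
    have h1 : ‖φ j‖ ≤ ‖φ j - ψ' j‖ + ‖ψ' j‖ := by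
      calc ‖φ j‖ = ‖(φ j - ψ' j) + ψ' j‖ := by rw [sub_add_cancel]
        _ ≤ _ := norm_add_le _ _
    have h2 := hφ_ge j
    have h3 := hdiff_le j
    linarith
  have hc_ub : ∀ j, ‖ψ' j‖ ≤ 1 := by
    intro j
    have h1 : ‖ψ' j‖ ≤ ‖φ j‖ := by
      rw [hcnorm j, L1.norm_eq_integral_norm]
      refine integral_mono ((hInt j).norm.indicator (hAmeas j)) (hInt j).norm ?_
      exact Set.indicator_le_self' (fun x _ => norm_nonneg _)
    exact h1.trans (hφ_le j)
  have hmle1 : min ε 1 ≤ 1 := min_le_right _ _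
  have hmleε : min ε 1 ≤ ε := min_le_left _ _
  have hc_pos : ∀ j, 0 < ‖ψ' j‖ := by
    intro j
    have h1 := hc_lb j
    nlinarith
  have hδε : δ * (16 * ((n : ℝ) + 1)) ≤ ε := hδ_min.trans hmleε
  constructor
  · -- part (i) : the L∞ functions
    set sgn : Fin n → Ω → ℂ := fun j => (A j).indicator
      (fun x => if (φ j) x = 0 then 1
        else (starRingEnd ℂ) ((φ j) x) * ((‖(φ j) x‖⁻¹ : ℝ) : ℂ)) with hsgndef
    have hsgnmeas : ∀ j, Measurable (sgn j) := by
      intro j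
      refine Measurable.indicator ?_ (hAmeas j)
      refine Measurable.ite ?_ measurable_const ?_
      · exact (Lp.stronglyMeasurable (φ j)).measurable (measurableSet_singleton 0)
      · exact (Complex.continuous_conj.measurable.comp
          (Lp.stronglyMeasurable (φ j)).measurable).mul
          (Complex.measurable_ofReal.comp (hFmeas j).inv)
    have hsgn_norm : ∀ j x, ‖sgn j x‖ = (A j).indicator (fun _ => (1 : ℝ)) x := by
      intro j x
      by_cases hx : x ∈ A j
      · rw [hsgndef]
        simp only [Set.indicator_of_mem hx]
        by_cases h0 : (φ j) x = 0
        · rw [if_pos h0, norm_one]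
        · rw [if_neg h0, norm_mul, RCLike.norm_conj, Complex.norm_real, Real.norm_eq_abs,
            _root_.abs_of_nonneg (inv_nonneg.mpr (norm_nonneg _)),
            mul_inv_cancel₀ (norm_ne_zero_iff.mpr h0)]
      · rw [hsgndef]
        simp [Set.indicator_of_notMem hx]
    have hsgnmem : ∀ j, MemLp (sgn j) ⊤ μ := fun j =>
      memLp_top_of_bound (hsgnmeas j).aestronglyMeasurable 1
        (Filter.Eventually.of_forall fun x => by
          rw [hsgn_norm]
          by_cases hx : x ∈ A j <;> simp [hx])
    have hμA : ∀ j, μ (A j) ≠ 0 := by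
      intro j h0
      have hnm : ∀ᵐ x ∂μ, x ∉ A j := by
        rw [ae_iff]
        simpa using h0
      have hae : (A j).indicator (fun x => ‖(φ j) x‖) =ᵐ[μ] 0 := by
        filter_upwards [hnm] with x hx
        simp [Set.indicator_of_notMem hx]
      have hz : ‖ψ' j‖ = 0 := by
        rw [hcnorm j, integral_congr_ae hae]
        simp
      exact absurd hz (hc_pos j).ne'
    refine ⟨fun j => (hsgnmem j).toLp _, ?_, ?_, ?_⟩
    · intro j
      rw [Lp.norm_toLp (sgn j) (hsgnmem j), eLpNorm_exponent_top]
      have hee : eLpNormEssSup (sgn j) μ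
          = eLpNormEssSup ((A j).indicator fun _ => (1 : ℝ)) μ := by
        simp only [eLpNormEssSup]
        congr 1
        funext x
        rw [← ofReal_norm_eq_enorm, ← ofReal_norm_eq_enorm, hsgn_norm j x]
        by_cases hx : x ∈ A j <;> simp [hx]
      rw [hee, eLpNormEssSup_indicator_const_eq _ _ (hμA j)]
      simp
    · intro i j hij
      filter_upwards [MemLp.coeFn_toLp (hsgnmem i), MemLp.coeFn_toLp (hsgnmem j)]
        with x h1 h2
      rw [h1, h2, hsgndef]
      by_cases hx : x ∈ A i
      · have hxj : x ∉ A j := fun hxj => hdisj i j hij x hx hxj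
        simp [Set.indicator_of_notMem hxj]
      · simp [Set.indicator_of_notMem hx]
    · intro j
      have heq : ∫ x, ((hsgnmem j).toLp _) x * (φ j) x ∂μ
          = ∫ x, (((A j).indicator (fun x => ‖(φ j) x‖) x : ℝ) : ℂ) ∂μ := by
        refine integral_congr_ae ?_
        filter_upwards [MemLp.coeFn_toLp (hsgnmem j)] with x hx
        rw [hx, hsgndef]
        by_cases hxA : x ∈ A j
        · simp only [Set.indicator_of_mem hxA]
          by_cases h0 : (φ j) x = 0
          · rw [if_pos h0, h0, mul_zero]
            simp
          · rw [if_neg h0]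
            exact aux_sign_mul _
        · simp [Set.indicator_of_notMem hxA]
      have h9 : ∫ x, (((A j).indicator (fun x => ‖(φ j) x‖) x : ℝ) : ℂ) ∂μ
          = ((∫ x, (A j).indicator (fun x => ‖(φ j) x‖) x ∂μ : ℝ) : ℂ) := integral_ofReal
      rw [heq, h9, ← hcnorm j]
      simp only [Complex.ofReal_re]
      have h5 := hc_lb j
      nlinarith
  · -- part (ii) : the disjoint L¹ functions
    refine ⟨fun j => ((‖ψ' j‖ : ℝ) : ℂ)⁻¹ • ψ' j, ?_, ?_, ?_⟩
    · intro j
      rw [norm_smul, norm_inv, Complex.norm_real, Real.norm_eq_abs,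
        abs_of_pos (hc_pos j), inv_mul_cancel₀ (hc_pos j).ne']
    · intro i j hij
      filter_upwards [Lp.coeFn_smul (((‖ψ' i‖ : ℝ) : ℂ))⁻¹ (ψ' i),
        Lp.coeFn_smul (((‖ψ' j‖ : ℝ) : ℂ))⁻¹ (ψ' j), hψ'coe i, hψ'coe j] with x h1 h2 h3 h4
      rw [h1, h2, Pi.smul_apply, Pi.smul_apply, smul_eq_mul, smul_eq_mul, h3, h4]
      by_cases hx : x ∈ A i
      · have hxj : x ∉ A j := fun hxj => hdisj i j hij x hx hxj
        rw [Set.indicator_of_notMem hxj]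
        ring
      · rw [Set.indicator_of_notMem hx]
        ring
    · intro j
      have hcj := hc_pos j
      have hub := hc_ub j
      have hinv1 : 1 ≤ ‖ψ' j‖⁻¹ := by
        nlinarith [mul_inv_cancel₀ hcj.ne', inv_pos.mpr hcj]
      have key : ‖φ j - ((‖ψ' j‖ : ℝ) : ℂ)⁻¹ • ψ' j‖
          ≤ ‖φ j - ψ' j‖ + (1 - ‖ψ' j‖) := by
        have h1 : φ j - ((‖ψ' j‖ : ℝ) : ℂ)⁻¹ • ψ' j
            = (φ j - ψ' j) + (ψ' j - ((‖ψ' j‖ : ℝ) : ℂ)⁻¹ • ψ' j) := by abel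
        rw [h1]
        refine (norm_add_le _ _).trans ?_
        have h2 : ψ' j - ((‖ψ' j‖ : ℝ) : ℂ)⁻¹ • ψ' j
            = ((1 : ℂ) - ((‖ψ' j‖ : ℝ) : ℂ)⁻¹) • ψ' j := by
          rw [sub_smul, one_smul]
        rw [h2, norm_smul]
        have h3 : ‖(1 : ℂ) - ((‖ψ' j‖ : ℝ) : ℂ)⁻¹‖ = ‖ψ' j‖⁻¹ - 1 := by
          rw [show (1 : ℂ) - ((‖ψ' j‖ : ℝ) : ℂ)⁻¹ = (((1 - ‖ψ' j‖⁻¹ : ℝ)) : ℂ) by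
            push_cast; ring, Complex.norm_real, Real.norm_eq_abs,
            abs_of_nonpos (by linarith)]
          ring
        rw [h3]
        have h4 : (‖ψ' j‖⁻¹ - 1) * ‖ψ' j‖ = 1 - ‖ψ' j‖ := by
          field_simp
        rw [h4]
      have h6 := hdiff_le j
      have h7 := hc_lb j
      have h8 : ‖φ j - ((‖ψ' j‖ : ℝ) : ℂ)⁻¹ • ψ' j‖ ≤ 4 * δ * (n : ℝ) + (δ + 4 * δ * (n : ℝ)) := by
        refine key.trans ?_
        have : 1 - ‖ψ' j‖ ≤ δ + 4 * δ * (n : ℝ) := by linarith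
        linarith
      refine lt_of_le_of_lt h8 ?_
      nlinarith
end

section
/- Let (Ω, Σ, μ) be a σ-finite measure space and let (φ_m)_{m∈ℕ} be a sequence in L¹(μ, ℂ) with ‖φ_m‖₁ = 1 for all m which spans ℓ1 almost isometrically, i.e. there is a sequence (δ_m) of reals with 0 ≤ δ_m and δ_m → 0 such that ‖∑_{n≥m} α_n φ_n‖₁ ≥ (1 − δ_m) ∑_{n≥m} |α_n| for every m and every finitely supported family of complex scalars (α_n)_{n≥m}. Then there exist a strictly increasing sequence (m_n) of natural numbers and a sequence (φ̃_n) in L¹(μ, ℂ) with φ̃_n·φ̃_k = 0 μ-almost everywhere whenever n ≠ k, such that ‖φ_{m_n} − φ̃_n‖₁ → 0 as n → ∞. -/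
open MeasureTheory Filter Complex
open scoped ENNReal NNReal

lemma gap_aux (a c : ℂ) (h2 : ‖a + c‖ ^ 2 ≤ ‖a‖ ^ 2 + ‖c‖ ^ 2 - ‖a‖ * ‖c‖) :
    min ‖a‖ ‖c‖ / 2 ≤ ‖a‖ + ‖c‖ - ‖a + c‖ := by
  have hA : (0:ℝ) ≤ ‖a‖ := norm_nonneg _
  have hC : (0:ℝ) ≤ ‖c‖ := norm_nonneg _
  have hN : (0:ℝ) ≤ ‖a + c‖ := norm_nonneg _
  have hm1 : min ‖a‖ ‖c‖ ≤ ‖a‖ := min_le_left _ _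
  have hm2 : min ‖a‖ ‖c‖ ≤ ‖c‖ := min_le_right _ _
  have hm0 : (0:ℝ) ≤ min ‖a‖ ‖c‖ := le_min hA hC
  nlinarith [sq_nonneg (‖a‖ + ‖c‖ - min ‖a‖ ‖c‖ / 2 - ‖a + c‖),
    sq_nonneg (‖a‖ + ‖c‖ - min ‖a‖ ‖c‖ / 2 + ‖a + c‖),
    mul_le_mul_of_nonneg_right hm1 hC, mul_le_mul_of_nonneg_right hm2 hA]

lemma norm_add_sq'' (z w : ℂ) : ‖z + w‖ ^ 2 = ‖z‖ ^ 2 + ‖w‖ ^ 2 + 2 * (z * (starRingEnd ℂ) w).re := by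
  rw [← normSq_eq_norm_sq, ← normSq_eq_norm_sq, ← normSq_eq_norm_sq, normSq_add]

lemma gap_aux' (a b θ : ℂ) (hθ : ‖θ * b‖ = ‖b‖)
    (h2 : ‖a + θ * b‖ ^ 2 ≤ ‖a‖ ^ 2 + ‖b‖ ^ 2 - ‖a‖ * ‖b‖) :
    min ‖a‖ ‖b‖ / 2 ≤ ‖a‖ + ‖b‖ - ‖a + θ * b‖ := by
  have := gap_aux a (θ * b)
  rw [hθ] at this
  exact this h2

lemma four_gaps (a b : ℂ) :
    min ‖a‖ ‖b‖ ≤ 2 * ((‖a‖ + ‖b‖ - ‖a + (1:ℂ) * b‖) + (‖a‖ + ‖b‖ - ‖a + (-1:ℂ) * b‖)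
      + (‖a‖ + ‖b‖ - ‖a + Complex.I * b‖) + (‖a‖ + ‖b‖ - ‖a + (-Complex.I) * b‖)) := by
  have hA : (0:ℝ) ≤ ‖a‖ := norm_nonneg _
  have hB : (0:ℝ) ≤ ‖b‖ := norm_nonneg _
  set w := a * (starRingEnd ℂ) b with hw
  have habs : w.re ^ 2 + w.im ^ 2 = (‖a‖ * ‖b‖) ^ 2 := by
    have h1 : normSq w = normSq a * normSq b := by
      rw [hw, normSq_mul, normSq_conj]
    have h2 : normSq w = w.re ^ 2 + w.im ^ 2 := by rw [normSq_apply]; ring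
    rw [← h2, h1, mul_pow, normSq_eq_norm_sq, normSq_eq_norm_sq]
  have hABle : ‖a‖ * ‖b‖ ≤ |w.re| + |w.im| := by
    nlinarith [abs_nonneg w.re, abs_nonneg w.im, _root_.sq_abs w.re, _root_.sq_abs w.im,
      mul_nonneg hA hB, sq_nonneg (|w.re| + |w.im| - ‖a‖ * ‖b‖),
      sq_nonneg (|w.re| + |w.im| + ‖a‖ * ‖b‖)]
  -- squared norm identities
  have e1 : ‖a + (1:ℂ) * b‖ ^ 2 = ‖a‖ ^ 2 + ‖b‖ ^ 2 + 2 * w.re := by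
    rw [norm_add_sq'' a ((1:ℂ) * b)]
    simp [hw]
  have e2 : ‖a + (-1:ℂ) * b‖ ^ 2 = ‖a‖ ^ 2 + ‖b‖ ^ 2 + 2 * (-w.re) := by
    rw [norm_add_sq'' a ((-1:ℂ) * b)]
    have : (a * (starRingEnd ℂ) ((-1:ℂ) * b)).re = -w.re := by
      rw [map_mul]
      simp [hw, Complex.mul_re, Complex.mul_im]
    rw [this]
    simp
  have e3 : ‖a + Complex.I * b‖ ^ 2 = ‖a‖ ^ 2 + ‖b‖ ^ 2 + 2 * w.im := by
    rw [norm_add_sq'' a (Complex.I * b)]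
    have : (a * (starRingEnd ℂ) (Complex.I * b)).re = w.im := by
      rw [map_mul]
      simp [hw, Complex.mul_re, Complex.mul_im]
      ring
    rw [this]
    simp
  have e4 : ‖a + (-Complex.I) * b‖ ^ 2 = ‖a‖ ^ 2 + ‖b‖ ^ 2 + 2 * (-w.im) := by
    rw [norm_add_sq'' a ((-Complex.I) * b)]
    have : (a * (starRingEnd ℂ) ((-Complex.I) * b)).re = -w.im := by
      rw [map_mul]
      simp [hw, Complex.mul_re, Complex.mul_im]
      ring
    rw [this]
    simp
  -- nonnegativity of all gaps
  have g1 : ‖a + (1:ℂ) * b‖ ≤ ‖a‖ + ‖b‖ := by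
    calc ‖a + (1:ℂ) * b‖ ≤ ‖a‖ + ‖(1:ℂ) * b‖ := norm_add_le _ _
    _ = ‖a‖ + ‖b‖ := by simp
  have g2 : ‖a + (-1:ℂ) * b‖ ≤ ‖a‖ + ‖b‖ := by
    calc ‖a + (-1:ℂ) * b‖ ≤ ‖a‖ + ‖(-1:ℂ) * b‖ := norm_add_le _ _
    _ = ‖a‖ + ‖b‖ := by simp
  have g3 : ‖a + Complex.I * b‖ ≤ ‖a‖ + ‖b‖ := by
    calc ‖a + Complex.I * b‖ ≤ ‖a‖ + ‖Complex.I * b‖ := norm_add_le _ _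
    _ = ‖a‖ + ‖b‖ := by simp
  have g4 : ‖a + (-Complex.I) * b‖ ≤ ‖a‖ + ‖b‖ := by
    calc ‖a + (-Complex.I) * b‖ ≤ ‖a‖ + ‖(-Complex.I) * b‖ := norm_add_le _ _
    _ = ‖a‖ + ‖b‖ := by simp
  -- pick the good rotation
  rcases le_total (|w.re|) (|w.im|) with hcmp | hcmp
  · -- |w.im| ≥ AB/2
    have him : ‖a‖ * ‖b‖ / 2 ≤ |w.im| := by linarith
    rcases le_total w.im 0 with hs | hs
    · -- w.im ≤ 0 : use θ = I, term 2*w.im ≤ -AB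
      have : min ‖a‖ ‖b‖ / 2 ≤ ‖a‖ + ‖b‖ - ‖a + Complex.I * b‖ := by
        apply gap_aux' a b Complex.I (by simp)
        rw [e3]
        have : |w.im| = -w.im := abs_of_nonpos hs
        nlinarith
      linarith
    · have : min ‖a‖ ‖b‖ / 2 ≤ ‖a‖ + ‖b‖ - ‖a + (-Complex.I) * b‖ := by
        apply gap_aux' a b (-Complex.I) (by simp)
        rw [e4]
        have : |w.im| = w.im := abs_of_nonneg hs
        nlinarith
      linarith
  · have hre : ‖a‖ * ‖b‖ / 2 ≤ |w.re| := by linarith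
    rcases le_total w.re 0 with hs | hs
    · have : min ‖a‖ ‖b‖ / 2 ≤ ‖a‖ + ‖b‖ - ‖a + (1:ℂ) * b‖ := by
        apply gap_aux' a b 1 (by simp)
        rw [e1]
        have : |w.re| = -w.re := abs_of_nonpos hs
        nlinarith
      linarith
    · have : min ‖a‖ ‖b‖ / 2 ≤ ‖a‖ + ‖b‖ - ‖a + (-1:ℂ) * b‖ := by
        apply gap_aux' a b (-1) (by simp)
        rw [e2]
        have : |w.re| = w.re := abs_of_nonneg hs
        nlinarith
      linarith

lemma sum_min_le_offDiag {ι : Type*} [DecidableEq ι] (s : Finset ι) (a : ι → ℝ) (b : ℝ)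
    (ha : ∀ i, 0 ≤ a i) (hb : 0 ≤ b) :
    ∑ i ∈ s, min (a i) b ≤ b + ∑ p ∈ s.offDiag, min (a p.1) (a p.2) := by
  rcases s.eq_empty_or_nonempty with rfl | hs
  · simp [hb]
  obtain ⟨i0, hi0s, hi0⟩ := s.exists_max_image a hs
  have h1 : ∑ i ∈ s, min (a i) b = min (a i0) b + ∑ i ∈ s.erase i0, min (a i) b :=
    (Finset.add_sum_erase s _ hi0s).symm
  have h2 : ∑ i ∈ s.erase i0, min (a i) b ≤ ∑ i ∈ s.erase i0, min (a i) (a i0) := by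
    refine Finset.sum_le_sum fun i hi => ?_
    rw [min_eq_left (hi0 i (Finset.mem_of_mem_erase hi))]
    exact min_le_left _ _
  have h3 : ∑ i ∈ s.erase i0, min (a i) (a i0)
      = ∑ p ∈ (s.erase i0).image (fun i => (i, i0)), min (a p.1) (a p.2) := by
    rw [Finset.sum_image]
    intro x _ y _ h
    exact (Prod.mk.injEq _ _ _ _).mp h |>.1
  have h4 : ∑ p ∈ (s.erase i0).image (fun i => (i, i0)), min (a p.1) (a p.2)
      ≤ ∑ p ∈ s.offDiag, min (a p.1) (a p.2) := by
    refine Finset.sum_le_sum_of_subset_of_nonneg ?_ ?_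
    · intro p hp
      simp only [Finset.mem_image] at hp
      obtain ⟨i, hi, rfl⟩ := hp
      exact Finset.mem_offDiag.mpr ⟨Finset.mem_of_mem_erase hi, hi0s, Finset.ne_of_mem_erase hi⟩
    · intro p _ _
      exact le_min (ha _) (ha _)
  have h5 : min (a i0) b ≤ b := min_le_right _ _
  linarith

lemma le_tsum_min {a : ℝ≥0∞} {b : ℕ → ℝ≥0∞} (h : a ≤ ∑' k, b k) :
    a ≤ ∑' k, min a (b k) := by
  by_cases hx : ∃ k, a ≤ b k
  · obtain ⟨k, hk⟩ := hx
    calc a = min a (b k) := (min_eq_left hk).symm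
    _ ≤ _ := ENNReal.le_tsum k
  · push_neg at hx
    calc a ≤ ∑' k, b k := h
    _ = ∑' k, min a (b k) := by
      refine tsum_congr fun k => ?_
      exact (min_eq_right (hx k).le).symm

lemma overlap_le {Ω : Type*} [MeasurableSpace Ω] {μ : Measure Ω}
    (φ : ℕ → Lp ℂ 1 μ) (hnorm : ∀ m, ‖φ m‖ = 1) (δ : ℕ → ℝ)
    (hspan : ∀ m : ℕ, ∀ s : Finset ℕ, ∀ α : ℕ → ℂ, (∀ n ∈ s, m ≤ n) →
      (1 - δ m) * ∑ n ∈ s, ‖α n‖ ≤ ‖∑ n ∈ s, α n • φ n‖)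
    (m i j : ℕ) (hij : i ≠ j) (hi : m ≤ i) (hj : m ≤ j) :
    ∫ x, min ‖(φ i) x‖ ‖(φ j) x‖ ∂μ ≤ 16 * δ m := by
  have hInt_i : Integrable (fun x => ‖(φ i) x‖) μ := (L1.integrable_coeFn (φ i)).norm
  have hInt_j : Integrable (fun x => ‖(φ j) x‖) μ := (L1.integrable_coeFn (φ j)).norm
  have hIntij : Integrable (fun x => ‖(φ i) x‖ + ‖(φ j) x‖) μ := hInt_i.add hInt_j
  -- the four gap bounds
  have key : ∀ θ : ℂ, ‖θ‖ = 1 →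
      Integrable (fun x => ‖(φ i) x + θ * (φ j) x‖) μ ∧
      ∫ x, (‖(φ i) x‖ + ‖(φ j) x‖ - ‖(φ i) x + θ * (φ j) x‖) ∂μ ≤ 2 * δ m := by
    intro θ hθ
    have hae : (fun x => (φ i) x + θ * (φ j) x) =ᵐ[μ] ⇑(φ i + θ • φ j) := by
      filter_upwards [Lp.coeFn_add (φ i) (θ • φ j), Lp.coeFn_smul θ (φ j)] with x h1 h2
      simp only [Pi.add_apply] at h1
      simp only [Pi.smul_apply, smul_eq_mul] at h2
      rw [h1, h2]
    have hIntsum : Integrable (fun x => ‖(φ i) x + θ * (φ j) x‖) μ :=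
      ((L1.integrable_coeFn (φ i + θ • φ j)).congr hae.symm).norm
    refine ⟨hIntsum, ?_⟩
    have hint3 : ∫ x, ‖(φ i) x + θ * (φ j) x‖ ∂μ = ‖φ i + θ • φ j‖ := by
      rw [L1.norm_eq_integral_norm]
      exact integral_congr_ae (hae.fun_comp norm)
    have hsp : (1 - δ m) * 2 ≤ ‖φ i + θ • φ j‖ := by
      have := hspan m {i, j} (fun n => if n = i then (1 : ℂ) else θ) (by
        intro n hn
        rcases Finset.mem_insert.mp hn with rfl | hn
        · exact hi
        · rw [Finset.mem_singleton.mp hn]; exact hj)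
      rw [Finset.sum_pair hij, Finset.sum_pair hij] at this
      have hii : (if i = i then (1:ℂ) else θ) = 1 := if_pos rfl
      have hji : (if j = i then (1:ℂ) else θ) = θ := if_neg (Ne.symm hij)
      simp only [eq_self_iff_true, if_true, hji, norm_one, hθ, one_smul] at this
      linarith
    have hni : ∫ x, ‖(φ i) x‖ ∂μ = 1 := by
      rw [← L1.norm_eq_integral_norm, hnorm]
    have hnj : ∫ x, ‖(φ j) x‖ ∂μ = 1 := by
      rw [← L1.norm_eq_integral_norm, hnorm]
    rw [integral_sub hIntij hIntsum, integral_add hInt_i hInt_j, hni, hnj, hint3]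
    linarith
  obtain ⟨int1, bd1⟩ := key 1 (by norm_num)
  obtain ⟨int2, bd2⟩ := key (-1) (by norm_num)
  obtain ⟨int3, bd3⟩ := key Complex.I (by simp)
  obtain ⟨int4, bd4⟩ := key (-Complex.I) (by simp)
  have J1 : Integrable (fun x => ‖(φ i) x‖ + ‖(φ j) x‖ - ‖(φ i) x + 1 * (φ j) x‖) μ :=
    hIntij.sub int1
  have J2 : Integrable (fun x => ‖(φ i) x‖ + ‖(φ j) x‖ - ‖(φ i) x + (-1) * (φ j) x‖) μ :=
    hIntij.sub int2
  have J3 : Integrable (fun x => ‖(φ i) x‖ + ‖(φ j) x‖ - ‖(φ i) x + Complex.I * (φ j) x‖) μ :=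
    hIntij.sub int3
  have J4 : Integrable (fun x => ‖(φ i) x‖ + ‖(φ j) x‖ - ‖(φ i) x + (-Complex.I) * (φ j) x‖) μ :=
    hIntij.sub int4
  have J12 : Integrable (fun x => (‖(φ i) x‖ + ‖(φ j) x‖ - ‖(φ i) x + 1 * (φ j) x‖)
      + (‖(φ i) x‖ + ‖(φ j) x‖ - ‖(φ i) x + (-1) * (φ j) x‖)) μ := J1.add J2
  have J123 : Integrable (fun x => (‖(φ i) x‖ + ‖(φ j) x‖ - ‖(φ i) x + 1 * (φ j) x‖)
      + (‖(φ i) x‖ + ‖(φ j) x‖ - ‖(φ i) x + (-1) * (φ j) x‖)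
      + (‖(φ i) x‖ + ‖(φ j) x‖ - ‖(φ i) x + Complex.I * (φ j) x‖)) μ := J12.add J3
  have hmin : Integrable (fun x => min ‖(φ i) x‖ ‖(φ j) x‖) μ := hInt_i.inf hInt_j
  have hmono : ∫ x, min ‖(φ i) x‖ ‖(φ j) x‖ ∂μ ≤
      ∫ x, (2 * ((‖(φ i) x‖ + ‖(φ j) x‖ - ‖(φ i) x + 1 * (φ j) x‖)
        + (‖(φ i) x‖ + ‖(φ j) x‖ - ‖(φ i) x + (-1) * (φ j) x‖)
        + (‖(φ i) x‖ + ‖(φ j) x‖ - ‖(φ i) x + Complex.I * (φ j) x‖)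
        + (‖(φ i) x‖ + ‖(φ j) x‖ - ‖(φ i) x + (-Complex.I) * (φ j) x‖))) ∂μ := by
    refine integral_mono hmin ?_ ?_
    · exact (J123.add J4).const_mul 2
    · intro x
      exact four_gaps ((φ i) x) ((φ j) x)
  rw [integral_const_mul, integral_add J123 J4,
    integral_add J12 J3, integral_add J1 J2] at hmono
  linarith

lemma overlap_tendsto {Ω : Type*} [MeasurableSpace Ω] {μ : Measure Ω}
    (φ : ℕ → Lp ℂ 1 μ) (hnorm : ∀ m, ‖φ m‖ = 1) (δ : ℕ → ℝ) (hδ0 : ∀ m, 0 ≤ δ m)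
    (hδ : Tendsto δ atTop (nhds 0))
    (hspan : ∀ m : ℕ, ∀ s : Finset ℕ, ∀ α : ℕ → ℂ, (∀ n ∈ s, m ≤ n) →
      (1 - δ m) * ∑ n ∈ s, ‖α n‖ ≤ ‖∑ n ∈ s, α n • φ n‖)
    (k : ℕ) :
    Tendsto (fun n => ∫ x, min ‖(φ n) x‖ ‖(φ k) x‖ ∂μ) atTop (nhds 0) := by
  set v : ℕ → ℝ := fun n => ∫ x, min ‖(φ n) x‖ ‖(φ k) x‖ ∂μ with hv
  have hIntmin : ∀ i j : ℕ, Integrable (fun x => min ‖(φ i) x‖ ‖(φ j) x‖) μ :=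
    fun i j => ((L1.integrable_coeFn (φ i)).norm).inf ((L1.integrable_coeFn (φ j)).norm)
  have hnn : ∀ n, 0 ≤ v n := fun n =>
    integral_nonneg fun x => le_min (norm_nonneg _) (norm_nonneg _)
  rw [Metric.tendsto_atTop]
  by_contra hcon
  push_neg at hcon
  obtain ⟨ε, hε, hbad⟩ := hcon
  have hfr : ∃ᶠ n in atTop, ε ≤ v n := by
    rw [frequently_atTop]
    intro N
    obtain ⟨n, hn1, hn2⟩ := hbad N
    refine ⟨n, hn1, ?_⟩
    rw [Real.dist_eq, sub_zero, _root_.abs_of_nonneg (hnn n)] at hn2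
    exact hn2
  set N : ℕ := ⌈4 / ε⌉₊ + 1 with hN
  have hNpos : 0 < (N:ℝ) := by positivity
  have hNε : 4 ≤ (N:ℝ) * ε := by
    have h1 : 4 / ε ≤ (N:ℝ) := le_trans (Nat.le_ceil _) (by exact_mod_cast Nat.le_succ _)
    calc (4:ℝ) = (4 / ε) * ε := by field_simp
    _ ≤ (N:ℝ) * ε := by gcongr
  have hδsmall : ∀ᶠ n in atTop, δ n < ε / (32 * N) := hδ.eventually
    (eventually_lt_nhds (by positivity))
  obtain ⟨m', hm'⟩ := hδsmall.exists
  obtain ⟨u, hu, hP⟩ := extraction_of_frequently_atTop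
    (hfr.and_eventually (eventually_ge_atTop m'))
  set s : Finset ℕ := (Finset.range N).image u with hs
  have hcard : s.card = N := by
    rw [hs, Finset.card_image_of_injective _ hu.injective, Finset.card_range]
  have hmem : ∀ i ∈ s, ε ≤ v i ∧ m' ≤ i := by
    intro i hi
    rw [hs, Finset.mem_image] at hi
    obtain ⟨j, _, rfl⟩ := hi
    exact (hP j).imp id id
  -- lower bound
  have hlow : (N:ℝ) * ε ≤ ∑ i ∈ s, v i := by
    have := Finset.card_nsmul_le_sum s v ε (fun i hi => (hmem i hi).1)
    rwa [hcard, nsmul_eq_mul] at this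
  -- upper bound
  have hup : ∑ i ∈ s, v i ≤ 1 + ∑ p ∈ s.offDiag, (16 * δ m') := by
    have hswap : ∑ i ∈ s, v i = ∫ x, ∑ i ∈ s, min ‖(φ i) x‖ ‖(φ k) x‖ ∂μ :=
      (integral_finset_sum s fun i _ => hIntmin i k).symm
    have hIntoff : Integrable (fun x => ‖(φ k) x‖
        + ∑ p ∈ s.offDiag, min ‖(φ p.1) x‖ ‖(φ p.2) x‖) μ :=
      ((L1.integrable_coeFn (φ k)).norm).add
        (integrable_finset_sum _ fun p _ => hIntmin p.1 p.2)
    have hptwise : ∀ x, ∑ i ∈ s, min ‖(φ i) x‖ ‖(φ k) x‖ ≤ ‖(φ k) x‖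
        + ∑ p ∈ s.offDiag, min ‖(φ p.1) x‖ ‖(φ p.2) x‖ :=
      fun x => sum_min_le_offDiag s (fun i => ‖(φ i) x‖) ‖(φ k) x‖
        (fun i => norm_nonneg _) (norm_nonneg _)
    have h1 : ∑ i ∈ s, v i ≤ ∫ x, (‖(φ k) x‖
        + ∑ p ∈ s.offDiag, min ‖(φ p.1) x‖ ‖(φ p.2) x‖) ∂μ := by
      rw [hswap]
      exact integral_mono (integrable_finset_sum _ fun i _ => hIntmin i k) hIntoff hptwise
    rw [integral_add ((L1.integrable_coeFn (φ k)).norm)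
      (integrable_finset_sum _ fun p _ => hIntmin p.1 p.2)] at h1
    have h2 : ∫ x, ‖(φ k) x‖ ∂μ = 1 := by rw [← L1.norm_eq_integral_norm, hnorm]
    rw [h2, integral_finset_sum _ fun p _ => hIntmin p.1 p.2] at h1
    refine h1.trans (by
      gcongr (1:ℝ) + ?_
      refine Finset.sum_le_sum fun p hp => ?_
      obtain ⟨hp1, hp2, hp12⟩ := Finset.mem_offDiag.mp hp
      exact overlap_le φ hnorm δ hspan m' p.1 p.2 hp12 (hmem _ hp1).2 (hmem _ hp2).2)
  have hoffcard : (s.offDiag.card : ℝ) ≤ (N:ℝ) * N := by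
    rw [Finset.offDiag_card, hcard]
    have h1 : N * N - N ≤ N * N := Nat.sub_le _ _
    calc ((N * N - N : ℕ) : ℝ) ≤ ((N * N : ℕ) : ℝ) := by exact_mod_cast h1
    _ = (N:ℝ) * N := by push_cast; ring
  have hsum_off : ∑ p ∈ s.offDiag, (16 * δ m') ≤ (N:ℝ) * ε / 2 := by
    rw [Finset.sum_const, nsmul_eq_mul]
    have hδm : (0:ℝ) ≤ 16 * δ m' := mul_nonneg (by norm_num) (hδ0 m')
    have hb : (16:ℝ) * δ m' ≤ 16 * (ε / (32 * N)) :=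
      mul_le_mul_of_nonneg_left hm'.le (by norm_num)
    calc (s.offDiag.card : ℝ) * (16 * δ m') ≤ ((N:ℝ) * N) * (16 * (ε / (32 * N))) :=
      mul_le_mul hoffcard hb hδm (by positivity)
    _ = (N:ℝ) * ε / 2 := by field_simp; ring
  linarith [hlow, hup, hsum_off, hNε]

/-- Commutative instance of the theorem on infinite `ℓ₁`-copies in preduals
of JBW*-triples: if a normalized sequence `(φ_m)` in `L¹(μ, ℂ)` (over a σ-finite measure)
spans `ℓ₁` almost isometrically, then there are a subsequence `(φ_{m_n})` and a pairwise
a.e. orthogonal sequence `(φ̃_n)` in `L¹(μ, ℂ)` with `‖φ_{m_n} - φ̃_n‖₁ → 0`. -/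
theorem l1_almost_isometric_perturbation_of_orthogonal_L1
    {Ω : Type*} [MeasurableSpace Ω] (μ : Measure Ω) [SigmaFinite μ]
    (φ : ℕ → Lp ℂ 1 μ) (hnorm : ∀ m, ‖φ m‖ = 1)
    (δ : ℕ → ℝ) (hδ0 : ∀ m, 0 ≤ δ m) (hδ : Tendsto δ atTop (nhds 0))
    (hspan : ∀ m : ℕ, ∀ s : Finset ℕ, ∀ α : ℕ → ℂ, (∀ n ∈ s, m ≤ n) →
      (1 - δ m) * ∑ n ∈ s, ‖α n‖ ≤ ‖∑ n ∈ s, α n • φ n‖) :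
    ∃ m : ℕ → ℕ, StrictMono m ∧
      ∃ ψ : ℕ → Lp ℂ 1 μ,
        (∀ n k, n ≠ k → ∀ᵐ x ∂μ, (ψ n) x * (ψ k) x = 0) ∧
        Tendsto (fun n => ‖φ (m n) - ψ n‖) atTop (nhds 0) := by
  classical
  have hIntmin : ∀ i j : ℕ, Integrable (fun x => min ‖(φ i) x‖ ‖(φ j) x‖) μ :=
    fun i j => ((L1.integrable_coeFn (φ i)).norm).inf ((L1.integrable_coeFn (φ j)).norm)
  have hstep : ∀ (p : ℕ) (t : Finset ℕ) (ε : ℝ), 0 < ε →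
      ∃ M, p < M ∧ ∀ k ∈ t, ∫ x, min ‖(φ M) x‖ ‖(φ k) x‖ ∂μ ≤ ε := by
    intro p t ε hε
    have h1 : ∀ᶠ M in atTop, ∀ k ∈ t, ∫ x, min ‖(φ M) x‖ ‖(φ k) x‖ ∂μ ≤ ε := by
      rw [eventually_all_finset]
      intro k _
      exact (overlap_tendsto φ hnorm δ hδ0 hδ hspan k).eventually (eventually_le_nhds hε)
    exact ((eventually_gt_atTop p).and h1).exists
  choose Mf hMf1 hMf2 using hstep
  let g : ℕ → ℕ × Finset ℕ := fun n => Nat.rec (motive := fun _ => ℕ × Finset ℕ)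
    ((0 : ℕ), ({0} : Finset ℕ))
    (fun n ih => (Mf ih.1 ih.2 ((4:ℝ)⁻¹ ^ (n+1)) (by positivity),
      insert (Mf ih.1 ih.2 ((4:ℝ)⁻¹ ^ (n+1)) (by positivity)) ih.2)) n
  set m : ℕ → ℕ := fun n => (g n).1 with hm
  have hmono : StrictMono m := by
    apply strictMono_nat_of_lt_succ
    intro n
    exact hMf1 (g n).1 (g n).2 ((4:ℝ)⁻¹ ^ (n+1)) (by positivity)
  have hmem2 : ∀ n k, k ≤ n → m k ∈ (g n).2 := by
    intro n
    induction n with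
    | zero =>
      intro k hk
      rw [Nat.le_zero] at hk
      subst hk
      exact Finset.mem_singleton_self 0
    | succ n ih =>
      intro k hk
      by_cases hk1 : k = n + 1
      · subst hk1
        exact Finset.mem_insert_self _ _
      · exact Finset.mem_insert_of_mem (ih k (by omega))
  have hOv : ∀ k n, k < n → ∫ x, min ‖(φ (m n)) x‖ ‖(φ (m k)) x‖ ∂μ ≤ (4:ℝ)⁻¹ ^ n := by
    intro k n hkn
    cases n with
    | zero => omega
    | succ n =>
      exact hMf2 (g n).1 (g n).2 ((4:ℝ)⁻¹ ^ (n+1)) (by positivity) (m k)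
        (hmem2 n k (by omega))
  -- measurable representatives
  set F : ℕ → Ω → ℂ := fun n => (Lp.aestronglyMeasurable (φ (m n))).mk _ with hFdef
  have hFae : ∀ n, ⇑(φ (m n)) =ᵐ[μ] F n :=
    fun n => (Lp.aestronglyMeasurable (φ (m n))).ae_eq_mk
  have hFsm : ∀ n, StronglyMeasurable (F n) :=
    fun n => (Lp.aestronglyMeasurable (φ (m n))).stronglyMeasurable_mk
  set G : Ω → ℝ≥0∞ := fun x => ∑' k, (‖F k x‖₊ : ℝ≥0∞) with hGdef
  have hGm : Measurable G := Measurable.ennreal_tsum fun k => (hFsm k).measurable.enorm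
  set A : ℕ → Set Ω := fun n => {x | G x < 2 * (‖F n x‖₊ : ℝ≥0∞)} with hAdef
  have hAm : ∀ n, MeasurableSet (A n) :=
    fun n => measurableSet_lt hGm ((hFsm n).measurable.enorm.const_mul 2)
  have hdisj : ∀ n j, n ≠ j → ∀ x, x ∈ A n → x ∉ A j := by
    intro n j hnj x hxn hxj
    have hsum : (‖F n x‖₊ : ℝ≥0∞) + ‖F j x‖₊ ≤ G x := by
      have := ENNReal.sum_le_tsum (f := fun k => (‖F k x‖₊ : ℝ≥0∞)) ({n, j} : Finset ℕ)
      rwa [Finset.sum_pair hnj] at this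
    have h1 : (‖F j x‖₊ : ℝ≥0∞) < ‖F n x‖₊ := by
      have h2 : (‖F n x‖₊ : ℝ≥0∞) + ‖F j x‖₊ < (‖F n x‖₊ : ℝ≥0∞) + ‖F n x‖₊ :=
        calc (‖F n x‖₊ : ℝ≥0∞) + ‖F j x‖₊ ≤ G x := hsum
        _ < 2 * ‖F n x‖₊ := hxn
        _ = (‖F n x‖₊ : ℝ≥0∞) + ‖F n x‖₊ := two_mul _
      exact (ENNReal.add_lt_add_iff_left ENNReal.coe_ne_top).mp h2
    have h1' : (‖F n x‖₊ : ℝ≥0∞) < ‖F j x‖₊ := by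
      have h2 : (‖F j x‖₊ : ℝ≥0∞) + ‖F n x‖₊ < (‖F j x‖₊ : ℝ≥0∞) + ‖F j x‖₊ :=
        calc (‖F j x‖₊ : ℝ≥0∞) + ‖F n x‖₊ = (‖F n x‖₊ : ℝ≥0∞) + ‖F j x‖₊ := add_comm _ _
        _ ≤ G x := hsum
        _ < 2 * ‖F j x‖₊ := hxj
        _ = (‖F j x‖₊ : ℝ≥0∞) + ‖F j x‖₊ := two_mul _
      exact (ENNReal.add_lt_add_iff_left ENNReal.coe_ne_top).mp h2
    exact absurd h1 h1'.asymm
  have hmemF : ∀ n, MemLp (F n) 1 μ := fun n => (Lp.memLp (φ (m n))).ae_eq (hFae n)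
  have hmemInd : ∀ n, MemLp ((A n).indicator (F n)) 1 μ :=
    fun n => (hmemF n).indicator (hAm n)
  refine ⟨m, hmono, fun n => (hmemInd n).toLp _, ?_, ?_⟩
  · intro n k hnk
    filter_upwards [MemLp.coeFn_toLp (hmemInd n), MemLp.coeFn_toLp (hmemInd k)] with x h1 h2
    rw [h1, h2]
    by_cases hx : x ∈ A n
    · rw [Set.indicator_of_notMem (hdisj n k hnk x hx)]
      exact mul_zero _
    · rw [Set.indicator_of_notMem hx]
      exact zero_mul _
  · -- norm convergence
    have hbound : ∀ n, ‖φ (m n) - (hmemInd n).toLp _‖ ≤ 2 * (2:ℝ)⁻¹ ^ n := by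
      intro n
      have hae : ⇑(φ (m n) - (hmemInd n).toLp _) =ᵐ[μ] (A n)ᶜ.indicator (F n) := by
        filter_upwards [Lp.coeFn_sub (φ (m n)) ((hmemInd n).toLp _),
          MemLp.coeFn_toLp (hmemInd n), hFae n] with x h1 h2 h3
        rw [h1]
        simp only [Pi.sub_apply]
        rw [h2, h3]
        by_cases hx : x ∈ A n
        · rw [Set.indicator_of_mem hx, Set.indicator_of_notMem (by simpa using hx)]
          simp
        · rw [Set.indicator_of_notMem hx, Set.indicator_of_mem (by simpa using hx), sub_zero]
      have h1 : ‖φ (m n) - (hmemInd n).toLp _‖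
          = (∫⁻ x, (‖(A n)ᶜ.indicator (F n) x‖₊ : ℝ≥0∞) ∂μ).toReal := by
        rw [Lp.norm_def, eLpNorm_congr_ae hae, eLpNorm_one_eq_lintegral_enorm]
        rfl
      have e1 : ∫⁻ x, (‖(A n)ᶜ.indicator (F n) x‖₊ : ℝ≥0∞) ∂μ
          = ∫⁻ x in (A n)ᶜ, (‖F n x‖₊ : ℝ≥0∞) ∂μ := by
        rw [← lintegral_indicator (hAm n).compl]
        refine lintegral_congr fun x => ?_
        rw [nnnorm_indicator_eq_indicator_nnnorm]
        by_cases hx : x ∈ (A n)ᶜ <;> simp [hx]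
      have e2 : ∀ x ∈ (A n)ᶜ, (‖F n x‖₊ : ℝ≥0∞)
          ≤ ∑' k, (if k = n then 0 else min (‖F n x‖₊ : ℝ≥0∞) (‖F k x‖₊)) := by
        intro x hx
        have hxA : 2 * (‖F n x‖₊ : ℝ≥0∞) ≤ G x := not_lt.mp hx
        have hsplit : G x = (‖F n x‖₊ : ℝ≥0∞) + ∑' k, (if k = n then 0 else (‖F k x‖₊ : ℝ≥0∞)) := by
          have := ENNReal.tsum_eq_add_tsum_ite (f := fun k => (‖F k x‖₊ : ℝ≥0∞)) n
          convert this using 2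
          exact tsum_congr fun k => by congr
        have hcore : (‖F n x‖₊ : ℝ≥0∞) ≤ ∑' k, (if k = n then 0 else (‖F k x‖₊ : ℝ≥0∞)) := by
          rw [hsplit, two_mul] at hxA
          exact (ENNReal.add_le_add_iff_left ENNReal.coe_ne_top).mp hxA
        refine (le_tsum_min hcore).trans (le_of_eq (tsum_congr fun k => ?_))
        by_cases hk : k = n
        · rw [if_pos hk, if_pos hk]
          exact min_eq_right zero_le
        · rw [if_neg hk, if_neg hk]
      have e3 : ∫⁻ x in (A n)ᶜ, (‖F n x‖₊ : ℝ≥0∞) ∂μ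
          ≤ ∑' k, ∫⁻ x, (if k = n then 0 else min (‖F n x‖₊ : ℝ≥0∞) (‖F k x‖₊)) ∂μ := by
        have hmeas : ∀ k : ℕ, AEMeasurable
            (fun x => (if k = n then 0 else min (‖F n x‖₊ : ℝ≥0∞) (‖F k x‖₊))) μ := by
          intro k
          by_cases hk : k = n
          · simp only [if_pos hk]
            exact aemeasurable_const
          · simp only [if_neg hk]
            exact ((hFsm n).measurable.enorm.min (hFsm k).measurable.enorm).aemeasurable
        calc ∫⁻ x in (A n)ᶜ, (‖F n x‖₊ : ℝ≥0∞) ∂μ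
            ≤ ∫⁻ x in (A n)ᶜ, ∑' k, (if k = n then 0 else min (‖F n x‖₊ : ℝ≥0∞) (‖F k x‖₊)) ∂μ :=
          setLIntegral_mono' (hAm n).compl e2
        _ ≤ ∫⁻ x, ∑' k, (if k = n then 0 else min (‖F n x‖₊ : ℝ≥0∞) (‖F k x‖₊)) ∂μ :=
          setLIntegral_le_lintegral _ _
        _ = ∑' k, ∫⁻ x, (if k = n then 0 else min (‖F n x‖₊ : ℝ≥0∞) (‖F k x‖₊)) ∂μ :=
          lintegral_tsum hmeas
      have e4 : ∀ k, ∫⁻ x, (if k = n then 0 else min (‖F n x‖₊ : ℝ≥0∞) (‖F k x‖₊)) ∂μ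
          ≤ ENNReal.ofReal ((2:ℝ)⁻¹ ^ n * (2:ℝ)⁻¹ ^ k) := by
        intro k
        by_cases hk : k = n
        · simp only [if_pos hk, lintegral_const, zero_mul]
          exact zero_le
        · simp only [if_neg hk]
          have hcongr : ∫⁻ x, min (‖F n x‖₊ : ℝ≥0∞) (‖F k x‖₊) ∂μ
              = ∫⁻ x, min (‖(φ (m n)) x‖₊ : ℝ≥0∞) (‖(φ (m k)) x‖₊) ∂μ := by
            refine lintegral_congr_ae ?_
            filter_upwards [hFae n, hFae k] with x hx1 hx2
            rw [hx1, hx2]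
          have hofreal : ∫⁻ x, min (‖(φ (m n)) x‖₊ : ℝ≥0∞) (‖(φ (m k)) x‖₊) ∂μ
              = ENNReal.ofReal (∫ x, min ‖(φ (m n)) x‖ ‖(φ (m k)) x‖ ∂μ) := by
            rw [ofReal_integral_eq_lintegral_ofReal (hIntmin (m n) (m k))
              (Filter.Eventually.of_forall fun x => le_min (norm_nonneg _) (norm_nonneg _))]
            refine lintegral_congr fun x => ?_
            rw [Monotone.map_min (fun _ _ h => ENNReal.ofReal_le_ofReal h),
              ofReal_norm, ofReal_norm]
            rfl
          rw [hcongr, hofreal]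
          apply ENNReal.ofReal_le_ofReal
          have hhalf : ∀ a b : ℕ, a ≤ b → (2:ℝ)⁻¹ ^ b ≤ (2:ℝ)⁻¹ ^ a :=
            fun a b hab => pow_le_pow_of_le_one (by norm_num) (by norm_num) hab
          have h4eq : ∀ j : ℕ, (4:ℝ)⁻¹ ^ j = (2:ℝ)⁻¹ ^ j * (2:ℝ)⁻¹ ^ j := by
            intro j
            rw [← mul_pow]
            norm_num
          rcases lt_or_gt_of_ne hk with hlt | hgt
          · -- k < n
            refine (hOv k n hlt).trans ?_
            rw [h4eq n]
            exact mul_le_mul_of_nonneg_left (hhalf k n hlt.le) (by positivity)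
          · -- n < k
            have hcomm : ∫ x, min ‖(φ (m n)) x‖ ‖(φ (m k)) x‖ ∂μ
                = ∫ x, min ‖(φ (m k)) x‖ ‖(φ (m n)) x‖ ∂μ :=
              integral_congr_ae (Filter.Eventually.of_forall fun x => min_comm _ _)
            rw [hcomm]
            refine (hOv n k hgt).trans ?_
            rw [h4eq k]
            exact mul_le_mul_of_nonneg_right (hhalf n k hgt.le) (by positivity)
      have e5 : ∑' k : ℕ, ENNReal.ofReal ((2:ℝ)⁻¹ ^ n * (2:ℝ)⁻¹ ^ k)
          = ENNReal.ofReal ((2:ℝ)⁻¹ ^ n * 2) := by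
        rw [← ENNReal.ofReal_tsum_of_nonneg (fun k => by positivity)
          (((summable_geometric_of_lt_one (by norm_num) (by norm_num))).mul_left _)]
        congr 1
        rw [tsum_mul_left, tsum_geometric_of_lt_one (by norm_num) (by norm_num)]
        norm_num
      have h2 : ∫⁻ x, (‖(A n)ᶜ.indicator (F n) x‖₊ : ℝ≥0∞) ∂μ
          ≤ ENNReal.ofReal ((2:ℝ)⁻¹ ^ n * 2) := by
        rw [e1]
        exact (e3.trans (ENNReal.tsum_le_tsum e4)).trans (le_of_eq e5)
      rw [h1]
      calc (∫⁻ x, (‖(A n)ᶜ.indicator (F n) x‖₊ : ℝ≥0∞) ∂μ).toReal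
          ≤ (ENNReal.ofReal ((2:ℝ)⁻¹ ^ n * 2)).toReal :=
        ENNReal.toReal_mono ENNReal.ofReal_ne_top h2
      _ = (2:ℝ)⁻¹ ^ n * 2 := ENNReal.toReal_ofReal (by positivity)
      _ = 2 * (2:ℝ)⁻¹ ^ n := by ring
    refine squeeze_zero (fun n => norm_nonneg _) hbound ?_
    have h2 : Tendsto (fun n : ℕ => (2:ℝ) * (2:ℝ)⁻¹ ^ n) atTop (nhds (2 * 0)) :=
      (tendsto_pow_atTop_nhds_zero_of_lt_one (by norm_num) (by norm_num)).const_mul 2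
    simpa using h2
end

section
/- Let A be a C*-algebra, let s, t ≥ 0, let (c_n)_{n∈ℕ} be a sequence of pairwise orthogonal elements of A (c_n·c_k* = 0 and c_k*·c_n = 0 for n ≠ k) with ‖c_n‖ = 1 for all n, and let (φ_n)_{n∈ℕ} be continuous linear functionals on A with ‖φ_n‖ ≤ 1, Re φ_n(c_n) ≥ s for all n, and ∑_{k∈F} |φ_n(c_k)| ≤ t for every n and every finite set F ⊆ ℕ with n ∉ F. Then for every finitely supported family of complex scalars (α_n) one has ‖∑_n α_n φ_n‖ ≥ (s − t) ∑_n |α_n|; moreover the witnessing element can be taken in the closed linear span of {c_k : k ∈ ℕ}: there is c in that span with ‖c‖ ≤ 1 and Re ∑_n α_n φ_n(c) ≥ (s − t) ∑_n |α_n|. -/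
theorem norm_sum_le_one_of_orthogonal {E : Type*} [NormedRing E] [StarRing E] [CStarRing E]
    (F : Finset ℕ) (a : ℕ → E)
    (h1 : ∀ n ∈ F, ∀ k ∈ F, n ≠ k → a n * star (a k) = 0)
    (h2 : ∀ n ∈ F, ∀ k ∈ F, n ≠ k → star (a n) * a k = 0)
    (hn : ∀ n ∈ F, ‖a n‖ ≤ 1) : ‖∑ n ∈ F, a n‖ ≤ 1 := by
  set x := ∑ n ∈ F, a n with hx
  set p : ℕ → E := fun n => a n * star (a n) with hp
  have hpzero : ∀ n ∈ F, ∀ k ∈ F, n ≠ k → p n * p k = 0 := by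
    intro n hnF k hkF hnk
    have : star (a n) * a k = 0 := h2 n hnF k hkF hnk
    calc p n * p k = a n * ((star (a n) * a k) * star (a k)) := by
          simp [hp, mul_assoc]
      _ = 0 := by rw [this]; simp
  have hb : x * star x = ∑ n ∈ F, p n := by
    rw [hx, star_sum, Finset.sum_mul_sum]
    refine Finset.sum_congr rfl fun n hnF => ?_
    exact Finset.sum_eq_single_of_mem n hnF fun k hkF hkn => h1 n hnF k hkF (Ne.symm hkn)
  set b := x * star x with hbdef
  have hbsa : IsSelfAdjoint b := by
    rw [hbdef]; exact IsSelfAdjoint.mul_star_self x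
  have hpow : ∀ m : ℕ, 1 ≤ m → b ^ m = ∑ n ∈ F, (p n) ^ m := by
    intro m hm
    induction m, hm using Nat.le_induction with
    | base => simpa using hb
    | succ m hm ih =>
      rw [pow_succ, ih, hb, Finset.sum_mul_sum]
      refine Finset.sum_congr rfl fun n hnF => ?_
      rw [Finset.sum_eq_single_of_mem n hnF ?_]
      · rw [← pow_succ]
      · intro k hkF hkn
        have e1 : p n ^ m * p k = 0 := by
          obtain ⟨j, rfl⟩ : ∃ j, m = j + 1 := ⟨m - 1, by omega⟩
          rw [pow_succ, mul_assoc, hpzero n hnF k hkF (Ne.symm hkn), mul_zero]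
        exact e1
  have hpn : ∀ n ∈ F, ‖p n‖ ≤ 1 := by
    intro n hnF
    rw [hp]
    calc ‖a n * star (a n)‖ ≤ ‖a n‖ * ‖star (a n)‖ := norm_mul_le _ _
      _ ≤ 1 * 1 := by
          have := hn n hnF
          have h2 : ‖star (a n)‖ ≤ 1 := by rwa [norm_star]
          exact mul_le_mul this h2 (norm_nonneg _) zero_le_one
      _ = 1 := one_mul 1
  have hbound : ∀ m : ℕ, ‖b‖ ^ (2 ^ m) ≤ (F.card : ℝ) := by
    intro m
    have h1 : ‖b ^ (2 ^ m)‖ = ‖b‖ ^ (2 ^ m) := by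
      have := hbsa.nnnorm_pow_two_pow m
      have := congrArg (fun x : NNReal => (x : ℝ)) this
      simpa using this
    rw [← h1, hpow (2 ^ m) (Nat.one_le_two_pow)]
    calc ‖∑ n ∈ F, (p n) ^ (2 ^ m)‖ ≤ ∑ n ∈ F, ‖(p n) ^ (2 ^ m)‖ := norm_sum_le _ _
      _ ≤ ∑ n ∈ F, 1 := by
          refine Finset.sum_le_sum fun n hnF => ?_
          calc ‖(p n) ^ (2 ^ m)‖ ≤ ‖p n‖ ^ (2 ^ m) := norm_pow_le' _ (Nat.pos_of_ne_zero (by positivity))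
            _ ≤ 1 := pow_le_one₀ (norm_nonneg _) (hpn n hnF)
      _ = (F.card : ℝ) := by simp
  have hble : ‖b‖ ≤ 1 := by
    by_contra h
    push_neg at h
    obtain ⟨m, hm⟩ := pow_unbounded_of_one_lt (F.card : ℝ) h
    have : ‖b‖ ^ m ≤ ‖b‖ ^ (2 ^ m) :=
      pow_le_pow_right₀ (le_of_lt h) (Nat.le_of_lt (Nat.lt_two_pow_self (n := m)))
    exact absurd (le_trans this (hbound m)) (not_le.mpr hm)
  have : ‖x‖ * ‖x‖ ≤ 1 := by
    rw [← CStarRing.norm_self_mul_star]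
    exact hble
  nlinarith [norm_nonneg x]



/-- The final estimate in the proof of the infinite `ℓ₁`-copies theorem:
if `(c_n)` are pairwise orthogonal norm-one elements of a C*-algebra `A` and `(φ_n)` are
functionals with `‖φ_n‖ ≤ 1`, `Re φ_n(c_n) ≥ s`, and `∑_{k ∈ F} |φ_n(c_k)| ≤ t` for every
`n` and finite `F` with `n ∉ F`, then `(φ_n)` spans `ℓ₁` `(s - t)`-isomorphically, with the
witnessing element taken in the closed linear span of the `c_k`. -/
theorem l1_lower_bound_from_orthogonal_elements
    {A : Type*} [NonUnitalCStarAlgebra A]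
    (s t : ℝ) (hs : 0 ≤ s) (ht : 0 ≤ t)
    (c : ℕ → A)
    (horth : ∀ n k, n ≠ k → c n * star (c k) = 0 ∧ star (c k) * c n = 0)
    (hcnorm : ∀ n, ‖c n‖ = 1)
    (φ : ℕ → A →L[ℂ] ℂ) (hφ : ∀ n, ‖φ n‖ ≤ 1)
    (hre : ∀ n, s ≤ (φ n (c n)).re)
    (hsum : ∀ n : ℕ, ∀ F : Finset ℕ, n ∉ F → ∑ k ∈ F, ‖φ n (c k)‖ ≤ t) :
    ∀ F : Finset ℕ, ∀ α : ℕ → ℂ,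
      (s - t) * ∑ n ∈ F, ‖α n‖ ≤ ‖∑ n ∈ F, α n • φ n‖ ∧
      ∃ x ∈ closure ((Submodule.span ℂ (Set.range c) : Submodule ℂ A) : Set A),
        ‖x‖ ≤ 1 ∧ (s - t) * ∑ n ∈ F, ‖α n‖ ≤ (∑ n ∈ F, α n * φ n x).re := by
  intro F α
  set β : ℕ → ℂ := fun n => star (α n) / (‖α n‖ : ℂ) with hβ
  have hβnorm : ∀ n, ‖β n‖ ≤ 1 := by
    intro n
    rw [hβ]
    simp only [norm_div, norm_star, Complex.norm_real, Real.norm_eq_abs,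
      abs_of_nonneg (norm_nonneg (α n))]
    exact div_self_le_one _
  have hαβ : ∀ n, α n * β n = (‖α n‖ : ℂ) := by
    intro n
    by_cases h : α n = 0
    · simp [hβ, h]
    · have h0 : (‖α n‖ : ℂ) ≠ 0 := by
        exact_mod_cast norm_ne_zero_iff.mpr h
      rw [hβ]
      simp only [RCLike.star_def]
      rw [mul_div_assoc', Complex.mul_conj, Complex.normSq_eq_norm_sq,
        div_eq_iff h0]
      push_cast
      ring
  set x : A := ∑ k ∈ F, β k • c k with hxdef
  -- norm bound via unitization
  have hxnorm : ‖x‖ ≤ 1 := by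
    have : (Unitization.inrNonUnitalStarAlgHom ℂ A) x
        = ∑ k ∈ F, ((β k • c k : A) : Unitization ℂ A) := by
      rw [hxdef]; exact map_sum _ _ _
    have hx2 : ‖x‖ = ‖∑ k ∈ F, ((β k • c k : A) : Unitization ℂ A)‖ := by
      rw [← this]
      exact (Unitization.norm_inr x).symm
    rw [hx2]
    refine norm_sum_le_one_of_orthogonal F (fun k => ((β k • c k : A) : Unitization ℂ A)) ?_ ?_ ?_
    · intro n hn k hk hnk
      rw [← Unitization.inr_star, ← Unitization.inr_mul]
      have : (β n • c n) * star (β k • c k) = (β n * star (β k)) • (c n * star (c k)) := by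
        rw [star_smul, smul_mul_smul_comm]
      rw [this, (horth n k hnk).1, smul_zero, Unitization.inr_zero]
    · intro n hn k hk hnk
      rw [← Unitization.inr_star, ← Unitization.inr_mul]
      have : star (β n • c n) * (β k • c k) = (star (β n) * β k) • (star (c n) * c k) := by
        rw [star_smul, smul_mul_smul_comm]
      rw [this, (horth k n (Ne.symm hnk)).2, smul_zero, Unitization.inr_zero]
    · intro n hn
      rw [Unitization.norm_inr, norm_smul, hcnorm n, mul_one]
      exact hβnorm n
  have hmem : x ∈ closure ((Submodule.span ℂ (Set.range c) : Submodule ℂ A) : Set A) := by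
    apply subset_closure
    exact Submodule.sum_mem _ fun k _ =>
      Submodule.smul_mem _ _ (Submodule.subset_span (Set.mem_range_self k))
  -- key estimate
  have hkey : (s - t) * ∑ n ∈ F, ‖α n‖ ≤ (∑ n ∈ F, α n * φ n x).re := by
    have hφx : ∀ n, φ n x = ∑ k ∈ F, β k * φ n (c k) := by
      intro n
      rw [hxdef, map_sum]
      exact Finset.sum_congr rfl fun k _ => by rw [map_smul]; rfl
    have hterm : ∀ n ∈ F, (s - t) * ‖α n‖ ≤ (α n * φ n x).re := by
      intro n hnF
      have hx1 : α n * φ n x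
          = α n * (β n * φ n (c n)) + ∑ k ∈ F.erase n, α n * (β k * φ n (c k)) := by
        rw [hφx n, Finset.mul_sum]
        exact (Finset.add_sum_erase F (fun k => α n * (β k * φ n (c k))) hnF).symm
      have hd : (α n * (β n * φ n (c n))).re = ‖α n‖ * (φ n (c n)).re := by
        rw [← mul_assoc, hαβ n, Complex.re_ofReal_mul]
      have hdge : ‖α n‖ * s ≤ (α n * (β n * φ n (c n))).re := by
        rw [hd]
        exact mul_le_mul_of_nonneg_left (hre n) (norm_nonneg _)
      have hcr : ‖∑ k ∈ F.erase n, α n * (β k * φ n (c k))‖ ≤ ‖α n‖ * t := by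
        calc ‖∑ k ∈ F.erase n, α n * (β k * φ n (c k))‖
            ≤ ∑ k ∈ F.erase n, ‖α n * (β k * φ n (c k))‖ := norm_sum_le _ _
          _ ≤ ∑ k ∈ F.erase n, ‖α n‖ * ‖φ n (c k)‖ := by
              refine Finset.sum_le_sum fun k _ => ?_
              rw [norm_mul, norm_mul]
              calc ‖α n‖ * (‖β k‖ * ‖φ n (c k)‖)
                  ≤ ‖α n‖ * (1 * ‖φ n (c k)‖) := by
                    gcongr
                    exact hβnorm k
                _ = ‖α n‖ * ‖φ n (c k)‖ := by ring
          _ = ‖α n‖ * ∑ k ∈ F.erase n, ‖φ n (c k)‖ := (Finset.mul_sum _ _ _).symm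
          _ ≤ ‖α n‖ * t :=
              mul_le_mul_of_nonneg_left (hsum n _ (Finset.notMem_erase n F)) (norm_nonneg _)
      have hcrge : -(‖α n‖ * t) ≤ (∑ k ∈ F.erase n, α n * (β k * φ n (c k))).re := by
        have h1 : |(∑ k ∈ F.erase n, α n * (β k * φ n (c k))).re|
            ≤ ‖∑ k ∈ F.erase n, α n * (β k * φ n (c k))‖ := Complex.abs_re_le_norm _
        have := (abs_le.mp h1).1
        linarith
      rw [hx1, Complex.add_re]
      nlinarith [norm_nonneg (α n)]
    rw [Complex.re_sum, Finset.mul_sum]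
    exact Finset.sum_le_sum hterm
  refine ⟨?_, x, hmem, hxnorm, hkey⟩
  -- first conjunct
  have happ : (∑ n ∈ F, α n • φ n) x = ∑ n ∈ F, α n * φ n x := by
    rw [ContinuousLinearMap.sum_apply]
    exact Finset.sum_congr rfl fun n _ => rfl
  calc (s - t) * ∑ n ∈ F, ‖α n‖ ≤ (∑ n ∈ F, α n * φ n x).re := hkey
    _ ≤ ‖∑ n ∈ F, α n * φ n x‖ := Complex.re_le_norm _
    _ = ‖(∑ n ∈ F, α n • φ n) x‖ := by rw [happ]
    _ ≤ ‖∑ n ∈ F, α n • φ n‖ * ‖x‖ := (∑ n ∈ F, α n • φ n).le_opNorm x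
    _ ≤ ‖∑ n ∈ F, α n • φ n‖ * 1 := by
        exact mul_le_mul_of_nonneg_left hxnorm (norm_nonneg _)
    _ = ‖∑ n ∈ F, α n • φ n‖ := mul_one _
end
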